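/- arXiv:2011.00437 — 15 statements merged into one kernel-verified Lean document; each statement's English description precedes it below -/
import Mathlib

section
/- For every cardinal number c there exist a complete Boolean algebra B and a function g : ℕ → B such that c ≤ #B and B is generated by the range of g as a complete Boolean algebra, i.e., the only subset of B that contains every g(n) and is closed under complements and under suprema of arbitrary subsets is B itself. -/
universe u

open Heyting TopologicalSpace Set

namespace GaifmanHales

section RegularFrame

variable {α : Type*} [Order.Frame α]

noncomputable instance : SupSet (Heyting.Regular α) :=
  ⟨fun S => Regular.toRegular (sSup (Regular.val '' S))⟩

noncomputable instance : InfSet (Heyting.Regular α) :=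
  ⟨fun S => ⟨(sSup ((fun a => (Regular.val a)ᶜ) '' S))ᶜ, isRegular_compl _⟩⟩

theorem regular_coe_sSup (S : Set (Heyting.Regular α)) :
    ((sSup S : Heyting.Regular α) : α) = (sSup (Regular.val '' S))ᶜᶜ := rfl

noncomputable instance : CompleteLattice (Heyting.Regular α) :=
  { Regular.lattice, Regular.boundedOrder with
    sSup := sSup
    sInf := sInf
    isLUB_sSup := fun S => ⟨fun a ha => Regular.coe_le_coe.1 <|
      (le_sSup (Set.mem_image_of_mem _ ha)).trans le_compl_compl,
     fun a h => Regular.coe_le_coe.1 <| by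
      refine (compl_anti (compl_anti (sSup_le ?_))).trans_eq a.2
      rintro x ⟨b, hb, rfl⟩; exact h hb⟩
    isGLB_sInf := fun S => ⟨fun a ha => Regular.coe_le_coe.1 <| by
      refine (compl_anti (le_sSup ?_)).trans_eq a.2
      exact ⟨a, ha, rfl⟩,
     fun a h => Regular.coe_le_coe.1 <| by
      show (a : α) ≤ (sSup ((fun a => (Regular.val a)ᶜ) '' S))ᶜ
      rw [le_compl_iff_disjoint_right, disjoint_sSup_iff]
      rintro x ⟨b, hb, rfl⟩
      exact b.2.disjoint_compl_right_iff.2 (h hb)⟩ }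

noncomputable instance : CompleteBooleanAlgebra (Heyting.Regular α) :=
  { (inferInstance : CompleteLattice (Heyting.Regular α)),
    (inferInstance : BooleanAlgebra (Heyting.Regular α)) with }

end RegularFrame


section RO
variable {X : Type*} [TopologicalSpace X]

theorem opens_coe_compl (U : Opens X) : ((Uᶜ : Opens X) : Set X) = interior ((U : Set X)ᶜ) := by
  apply subset_antisymm
  · have hd : Disjoint (Uᶜ) U := disjoint_compl_left
    rw [disjoint_iff] at hd
    have hsub : ((Uᶜ : Opens X) : Set X) ⊆ (U : Set X)ᶜ := by
      intro x hx
      intro hxU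
      have : x ∈ ((Uᶜ ⊓ U : Opens X) : Set X) := ⟨hx, hxU⟩
      rw [hd] at this
      exact this
    exact interior_maximal hsub (Uᶜ : Opens X).isOpen
  · have : (⟨interior ((U : Set X)ᶜ), isOpen_interior⟩ : Opens X) ≤ Uᶜ := by
      rw [le_compl_iff_disjoint_right, disjoint_iff]
      apply le_bot_iff.1
      intro x hx
      exact absurd hx.2 (interior_subset hx.1 : (x ∈ (U : Set X)ᶜ))
    exact this

/-- The regular open sets. -/
abbrev RO (X : Type*) [TopologicalSpace X] := Heyting.Regular (Opens X)

/-- Underlying set of a regular open. -/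
def toSet (u : RO X) : Set X := ((u : Opens X) : Set X)

theorem toSet_injective : Function.Injective (toSet (X := X)) := fun _ _ h =>
  Regular.coe_injective (SetLike.coe_injective h)

theorem isOpen_toSet (u : RO X) : IsOpen (toSet u) := (u : Opens X).isOpen

theorem toSet_le_iff {u v : RO X} : u ≤ v ↔ toSet u ⊆ toSet v := Iff.rfl

theorem toSet_inf (u v : RO X) : toSet (u ⊓ v) = toSet u ∩ toSet v := rfl

theorem toSet_top : toSet (⊤ : RO X) = Set.univ := rfl

theorem toSet_compl (u : RO X) : toSet uᶜ = interior (toSet u)ᶜ := opens_coe_compl _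

theorem toSet_sSup (S : Set (RO X)) :
    toSet (sSup S) = interior (closure (⋃ u ∈ S, toSet u)) := by
  have h1 : toSet (sSup S) =
      interior ((interior ((((sSup (Regular.val '' S) : Opens X) : Set X))ᶜ))ᶜ) := by
    show ((((sSup (Regular.val '' S))ᶜᶜ : Opens X)) : Set X) = _
    rw [opens_coe_compl, opens_coe_compl]
  rw [h1, interior_compl (s := (((sSup (Regular.val '' S) : Opens X) : Set X))), compl_compl]
  congr 2
  rw [Opens.coe_sSup]
  ext x
  simp [toSet]

theorem toSet_regular (u : RO X) : interior (closure (toSet u)) = toSet u := by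
  conv_rhs => rw [← compl_compl u]
  rw [toSet_compl, toSet_compl, interior_compl (s := toSet u), compl_compl]

/-- A clopen set as a regular open. -/
def ofClopen {A : Set X} (h : IsClopen A) : RO X :=
  ⟨⟨A, h.isOpen⟩, by
    have : ((((⟨A, h.isOpen⟩ : Opens X)ᶜ)ᶜ : Opens X) : Set X) = A := by
      rw [opens_coe_compl, opens_coe_compl]
      show interior (interior ((A : Set X)ᶜ))ᶜ = A
      rw [(h.compl.isOpen).interior_eq, compl_compl, h.isOpen.interior_eq]
    exact SetLike.coe_injective this⟩

theorem toSet_ofClopen {A : Set X} (h : IsClopen A) : toSet (ofClopen h) = A := rfl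

theorem toSet_clopen_reg {A : Set X} (h : IsClopen A) : interior (closure A) = A := by
  rw [h.isClosed.closure_eq, h.isOpen.interior_eq]

end RO
section Space

variable {κ : Type u} [LinearOrder κ] [TopologicalSpace κ] [DiscreteTopology κ]

theorem isOpen_rel (m n : ℕ) (r : κ → κ → Prop) : IsOpen {f : ℕ → κ | r (f m) (f n)} := by
  have h : {f : ℕ → κ | r (f m) (f n)} =
      ⋃ (a : κ) (b : κ) (_ : r a b), ((fun f : ℕ → κ => f m) ⁻¹' {a} ∩ (fun f : ℕ → κ => f n) ⁻¹' {b}) := by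
    ext f
    simp only [mem_setOf_eq, mem_iUnion, mem_inter_iff, mem_preimage, mem_singleton_iff]
    exact ⟨fun h => ⟨f m, f n, h, rfl, rfl⟩, by rintro ⟨a, b, h, rfl, rfl⟩; exact h⟩
  rw [h]
  refine isOpen_iUnion fun a => isOpen_iUnion fun b => isOpen_iUnion fun _ => ?_
  exact ((isOpen_discrete _).preimage (continuous_apply m)).inter
    ((isOpen_discrete _).preimage (continuous_apply n))

theorem isClopen_rel (m n : ℕ) (r : κ → κ → Prop) : IsClopen {f : ℕ → κ | r (f m) (f n)} := by
  constructor
  · rw [← isOpen_compl_iff]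
    have h : {f : ℕ → κ | r (f m) (f n)}ᶜ = {f : ℕ → κ | ¬ r (f m) (f n)} := rfl
    rw [h]
    exact isOpen_rel m n (fun x y => ¬ r x y)
  · exact isOpen_rel m n r

theorem cylinder_subset_of_mem_nhds {f : ℕ → κ} {s : Set (ℕ → κ)} (hs : s ∈ nhds f) :
    ∃ I : Finset ℕ, {g : ℕ → κ | ∀ i ∈ I, g i = f i} ⊆ s := by
  rw [nhds_pi, Filter.mem_pi] at hs
  obtain ⟨I, hIfin, t, ht, hsub⟩ := hs
  refine ⟨hIfin.toFinset, fun g hg => hsub ?_⟩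
  intro i hi
  have hgi : g i = f i := hg i (hIfin.mem_toFinset.2 hi)
  rw [hgi]
  exact mem_nhds_discrete.1 (ht i)

theorem interior_closure_lt (n : ℕ) (a : κ) :
    interior (closure (⋃ m, ({f : ℕ → κ | a ≤ f m} ∩ {f : ℕ → κ | f m < f n}))) =
      {f : ℕ → κ | a < f n} := by
  have hZ : IsClopen {f : ℕ → κ | a < f n} := isClopen_rel n n (fun x _ => a < x)
  apply subset_antisymm
  · have h1 : (⋃ m, ({f : ℕ → κ | a ≤ f m} ∩ {f : ℕ → κ | f m < f n})) ⊆ {f : ℕ → κ | a < f n} := by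
      rintro f hf
      simp only [mem_iUnion, mem_inter_iff, mem_setOf_eq] at hf
      obtain ⟨m, h1, h2⟩ := hf
      exact lt_of_le_of_lt h1 h2
    calc interior (closure (⋃ m, ({f : ℕ → κ | a ≤ f m} ∩ {f : ℕ → κ | f m < f n})))
        ⊆ interior {f : ℕ → κ | a < f n} := by
          refine interior_mono ?_
          rw [← hZ.isClosed.closure_eq]
          exact closure_mono h1
      _ = {f : ℕ → κ | a < f n} := hZ.isOpen.interior_eq
  · refine interior_maximal ?_ hZ.isOpen
    intro f hf
    rw [mem_closure_iff_nhds]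
    intro t ht
    obtain ⟨I, hI⟩ := cylinder_subset_of_mem_nhds ht
    set m := max (I.sup id) n + 1 with hm
    have hmn : n ≠ m := by omega
    have hmI : m ∉ I := by
      intro hmem
      have h2 : m ≤ I.sup id := Finset.le_sup (f := id) hmem
      omega
    refine ⟨Function.update f m a, hI ?_, ?_⟩
    · intro i hi
      exact Function.update_of_ne (fun h => hmI (by rw [← h]; exact hi)) _ _
    · rw [mem_iUnion]
      refine ⟨m, ?_, ?_⟩
      · show a ≤ Function.update f m a m
        rw [Function.update_self]
      · show Function.update f m a m < Function.update f m a n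
        rw [Function.update_self, Function.update_of_ne hmn]
        exact hf

/-- basic generators -/
noncomputable def Ur (n : ℕ) (a : κ) : RO (ℕ → κ) := ofClopen (isClopen_rel n n (fun x _ => x = a))

noncomputable def Er (m n : ℕ) : RO (ℕ → κ) := ofClopen (isClopen_rel m n (fun x y => x < y))

noncomputable def Wr (n : ℕ) (a : κ) : RO (ℕ → κ) := ofClopen (isClopen_rel n n (fun x _ => a ≤ x))

theorem toSet_Ur (n : ℕ) (a : κ) : toSet (Ur n a) = {f : ℕ → κ | f n = a} := rfl
theorem toSet_Er (m n : ℕ) : toSet (Er (κ := κ) m n) = {f : ℕ → κ | f m < f n} := rfl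
theorem toSet_Wr (n : ℕ) (a : κ) : toSet (Wr n a) = {f : ℕ → κ | a ≤ f n} := rfl

theorem generation [WellFoundedLT κ] (S : Set (RO (ℕ → κ)))
    (hE : ∀ m n : ℕ, Er (κ := κ) m n ∈ S)
    (hc : ∀ b ∈ S, bᶜ ∈ S)
    (hs : ∀ T : Set (RO (ℕ → κ)), T ⊆ S → sSup T ∈ S) : S = Set.univ := by
  have hsup2 : ∀ a ∈ S, ∀ b ∈ S, a ⊔ b ∈ S := by
    intro a ha b hb
    rw [← sSup_pair]
    refine hs _ ?_
    intro x hx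
    rcases hx with h | h
    · exact h ▸ ha
    · exact h ▸ hb
  have hinf2 : ∀ a ∈ S, ∀ b ∈ S, a ⊓ b ∈ S := by
    intro a ha b hb
    have h : a ⊓ b = (aᶜ ⊔ bᶜ)ᶜ := by rw [compl_sup, compl_compl, compl_compl]; rfl
    rw [h]
    exact hc _ (hsup2 _ (hc a ha) _ (hc b hb))
  have hbot : (⊥ : RO (ℕ → κ)) ∈ S := by
    rw [← sSup_empty]
    exact hs ∅ (Set.empty_subset S)
  have htop : (⊤ : RO (ℕ → κ)) ∈ S := by
    rw [← compl_bot]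
    exact hc _ hbot
  -- main induction
  have hUr : ∀ a : κ, ∀ n : ℕ, Ur (κ := κ) n a ∈ S := by
    intro a
    refine (wellFounded_lt (α := κ)).induction
      (C := fun a => ∀ n : ℕ, Ur (κ := κ) n a ∈ S) a ?_
    intro a IH
    have hW : ∀ m : ℕ, Wr (κ := κ) m a ∈ S := by
      intro m
      have key : Wr (κ := κ) m a = (sSup ((fun b => Ur (κ := κ) m b) '' {b : κ | b < a}))ᶜ := by
        apply toSet_injective
        rw [toSet_compl, toSet_sSup]
        have h1 : (⋃ u ∈ ((fun b => Ur (κ := κ) m b) '' {b : κ | b < a}), toSet u)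
            = {f : ℕ → κ | f m < a} := by
          ext f
          simp only [mem_iUnion, mem_image, mem_setOf_eq, exists_prop]
          constructor
          · rintro ⟨u, ⟨b, hb, rfl⟩, hf⟩
            rw [toSet_Ur] at hf
            exact hf ▸ hb
          · intro h
            exact ⟨Ur m (f m), ⟨f m, h, rfl⟩, rfl⟩
        rw [h1, toSet_clopen_reg (isClopen_rel m m (fun x _ => x < a))]
        have h2 : ({f : ℕ → κ | f m < a})ᶜ = {f : ℕ → κ | a ≤ f m} := by
          ext f; simp [not_lt]
        rw [h2, (isClopen_rel m m (fun x _ => a ≤ x)).isOpen.interior_eq]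
        rfl
      rw [key]
      refine hc _ (hs _ ?_)
      rintro u ⟨b, hb, rfl⟩
      exact IH b hb m
    intro n
    have hA : sSup (Set.range (fun m => Wr (κ := κ) m a ⊓ Er m n)) ∈ S := by
      refine hs _ ?_
      rintro u ⟨m, rfl⟩
      exact hinf2 _ (hW m) _ (hE m n)
    have hAset : toSet (sSup (Set.range (fun m => Wr (κ := κ) m a ⊓ Er m n)))
        = {f : ℕ → κ | a < f n} := by
      rw [toSet_sSup, Set.biUnion_range]
      have h1 : (⋃ m, toSet (Wr (κ := κ) m a ⊓ Er m n))
          = ⋃ m, ({f : ℕ → κ | a ≤ f m} ∩ {f : ℕ → κ | f m < f n}) := by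
        refine iUnion_congr fun m => ?_
        rw [toSet_inf, toSet_Wr, toSet_Er]
      rw [h1, interior_closure_lt n a]
    have key : Ur (κ := κ) n a
        = Wr n a ⊓ (sSup (Set.range (fun m => Wr (κ := κ) m a ⊓ Er m n)))ᶜ := by
      apply toSet_injective
      rw [toSet_inf, toSet_compl, hAset, toSet_Wr, toSet_Ur]
      have h2 : ({f : ℕ → κ | a < f n})ᶜ = {f : ℕ → κ | f n ≤ a} := by
        ext f; simp [not_lt]
      rw [h2, (isClopen_rel n n (fun x _ => x ≤ a)).isOpen.interior_eq]
      ext f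
      simp only [mem_setOf_eq, mem_inter_iff]
      exact ⟨fun h => ⟨h.ge, h.le⟩, fun h => le_antisymm h.2 h.1⟩
    rw [key]
    exact hinf2 _ (hW n) _ (hc _ hA)
  -- every element is in S
  rw [Set.eq_univ_iff_forall]
  intro u
  have hT : {v : RO (ℕ → κ) | v ∈ S ∧ toSet v ⊆ toSet u} ⊆ S := fun v hv => hv.1
  have hu : sSup {v : RO (ℕ → κ) | v ∈ S ∧ toSet v ⊆ toSet u} = u := by
    apply toSet_injective
    rw [toSet_sSup]
    apply subset_antisymm
    · calc interior (closure (⋃ v ∈ {v : RO (ℕ → κ) | v ∈ S ∧ toSet v ⊆ toSet u}, toSet v))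
          ⊆ interior (closure (toSet u)) :=
            interior_mono (closure_mono (Set.iUnion₂_subset fun v hv => hv.2))
        _ = toSet u := toSet_regular u
    · refine interior_maximal (Set.Subset.trans ?_ subset_closure) (isOpen_toSet u)
      intro f hf
      obtain ⟨I, hI⟩ := cylinder_subset_of_mem_nhds ((isOpen_toSet u).mem_nhds hf)
      have hfin : ∀ J : Finset ℕ, (J.inf fun i => Ur (κ := κ) i (f i)) ∈ S ∧
          toSet (J.inf fun i => Ur (κ := κ) i (f i)) = {g : ℕ → κ | ∀ i ∈ J, g i = f i} := by
        intro J
        induction J using Finset.induction_on with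
        | empty =>
          refine ⟨by simpa [Finset.inf_empty] using htop, ?_⟩
          rw [Finset.inf_empty]
          ext g
          simp [toSet_top]
        | @insert i J' hij ih =>
          rw [Finset.inf_insert]
          refine ⟨hinf2 _ (hUr (f i) i) _ ih.1, ?_⟩
          erw [toSet_inf]
          rw [ih.2, toSet_Ur]
          ext g
          simp only [mem_inter_iff, mem_setOf_eq, Finset.mem_insert]
          constructor
          · rintro ⟨h1, h2⟩ j hj
            rcases hj with rfl | hj
            · exact h1
            · exact h2 j hj
          · intro h
            exact ⟨h i (Or.inl rfl), fun j hj => h j (Or.inr hj)⟩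
      obtain ⟨hmem, hset⟩ := hfin I
      refine Set.mem_biUnion (x := I.inf fun i => Ur (κ := κ) i (f i))
        ⟨hmem, by rw [hset]; exact hI⟩ ?_
      rw [hset]
      exact fun i _ => rfl
  rw [← hu]
  exact hs _ hT

end Space

end GaifmanHales


/-- **Gaifman–Hales.** For every cardinal `c` there exist a complete Boolean algebra `B` and a
function `g : ℕ → B` such that `c ≤ #B` and `B` is generated by the range of `g` as a complete
Boolean algebra: the only subset of `B` containing every `g n` and closed under complements and
under suprema of arbitrary subsets is `B` itself. -/
theorem stmt_0 (c : Cardinal.{u}) :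
    ∃ (B : Type u) (_ : CompleteBooleanAlgebra B) (g : ℕ → B),
      c ≤ Cardinal.mk B ∧
      ∀ S : Set B, (∀ n : ℕ, g n ∈ S) → (∀ b ∈ S, bᶜ ∈ S) →
        (∀ T : Set B, T ⊆ S → sSup T ∈ S) → S = Set.univ := by
  letI : TopologicalSpace (Cardinal.ord c).ToType := ⊥
  haveI : DiscreteTopology (Cardinal.ord c).ToType := ⟨rfl⟩
  refine ⟨GaifmanHales.RO (ℕ → (Cardinal.ord c).ToType), inferInstance,
    fun k => GaifmanHales.Er (Nat.unpair k).1 (Nat.unpair k).2, ?_, ?_⟩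
  · have h1 : c = Cardinal.mk (Cardinal.ord c).ToType := (Cardinal.mk_ord_toType c).symm
    refine le_trans (le_of_eq h1) ?_
    refine Cardinal.mk_le_of_injective (f := fun a => GaifmanHales.Ur 0 a) ?_
    intro a b hab
    have h2 := congrArg GaifmanHales.toSet hab
    rw [GaifmanHales.toSet_Ur, GaifmanHales.toSet_Ur] at h2
    have h3 : (fun _ => a : ℕ → (Cardinal.ord c).ToType) ∈
        {f : ℕ → (Cardinal.ord c).ToType | f 0 = a} := rfl
    rw [h2] at h3
    exact h3
  · intro S hg hc hs
    refine GaifmanHales.generation S ?_ hc hs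
    intro m n
    have := hg (Nat.pair m n)
    simpa only [Nat.unpair_pair] using this
end

section
/- Let A be a frame. The map ν : A → A defined by ν(a) = aᶜᶜ, where aᶜ = a ⇨ ⊥ is the Heyting pseudocomplement, is a nucleus on A with ν(⊥) = ⊥, and it is the greatest dense nucleus: every nucleus j on A with j(⊥) = ⊥ satisfies j(a) ≤ ν(a) for all a ∈ A. -/
universe u

/-- A nucleus on a frame `A`: a binary-meet-preserving, inflationary, idempotent map `A → A`. -/
def IsNucleus {A : Type u} [Order.Frame A] (j : A → A) : Prop :=
  (∀ a b : A, j (a ⊓ b) = j a ⊓ j b) ∧ (∀ a : A, a ≤ j a) ∧ (∀ a : A, j (j a) = j a)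

/-- The double-pseudocomplement map `a ↦ aᶜᶜ` on a frame is a dense nucleus (`ν ⊥ = ⊥`), and it is
the greatest dense nucleus. -/
theorem stmt_1 {A : Type u} [Order.Frame A] :
    IsNucleus (fun a : A => aᶜᶜ) ∧ ((⊥ : A)ᶜᶜ = ⊥) ∧
      ∀ j : A → A, IsNucleus j → j ⊥ = ⊥ → ∀ a : A, j a ≤ aᶜᶜ := by
  refine ⟨⟨fun a b => compl_compl_inf_distrib a b, fun a => le_compl_compl,
      fun a => by simp [compl_compl_compl]⟩, by simp, ?_⟩
  rintro j ⟨hmeet, hinfl, _⟩ hdense a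
  have h : j a ⊓ aᶜ = ⊥ := by
    have : j a ⊓ aᶜ ≤ j a ⊓ j aᶜ := inf_le_inf_left _ (hinfl _)
    rw [← hmeet, inf_compl_self, hdense] at this
    exact le_bot_iff.mp this
  rw [le_compl_iff_disjoint_right, disjoint_iff]
  exact h
end

section
/- For any frame A, the frame N(A) of all nuclei on A (ordered pointwise) is zero-dimensional and ultraparacompact: every nucleus is the supremum of a set of complemented nuclei, and for every set S of nuclei with supremum the top nucleus there is a pairwise disjoint set T of nuclei, each element of which lies below some element of S, whose supremum is again the top nucleus. -/
universe u

/-- The nuclei on a frame `A`, ordered pointwise. -/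
abbrev Nuc (A : Type u) [Order.Frame A] : Type u := {j : A → A // IsNucleus j}

/-- The identity nucleus, the least nucleus. -/
def idNuc (A : Type u) [Order.Frame A] : Nuc A :=
  ⟨fun x => x, fun _ _ => rfl, fun _ => le_rfl, fun _ => rfl⟩

/-- The constant-`⊤` nucleus, the greatest nucleus. -/
def topNuc (A : Type u) [Order.Frame A] : Nuc A :=
  ⟨fun _ => ⊤, by
    refine ⟨fun a b => ?_, fun a => le_top, fun a => rfl⟩
    show (⊤ : A) = ⊤ ⊓ ⊤
    rw [top_inf_eq]⟩

/-- A nucleus is complemented if some nucleus has infimum the least nucleus (the identity) and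
supremum the greatest nucleus (the constant `⊤` map) with it, in the lattice of nuclei. -/
def NucComplemented {A : Type u} [Order.Frame A] (k : Nuc A) : Prop :=
  ∃ k' : Nuc A, IsGLB {k, k'} (idNuc A) ∧ IsLUB {k, k'} (topNuc A)

section Aux

variable {A : Type u} [Order.Frame A]

theorem nuc_mono {j : A → A} (hj : IsNucleus j) {a b : A} (h : a ≤ b) : j a ≤ j b := by
  have h2 := hj.1 a b
  rw [inf_eq_left.mpr h] at h2
  exact h2.le.trans inf_le_right

theorem pinch (b y : A) : b ⊓ (b ⇨ y) ≤ y := by rw [inf_comm]; exact himp_inf_le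

/-- The complemented nucleus `c_b ⊓ u_a`. -/
def tfun (a b y : A) : A := (b ⊔ y) ⊓ (a ⇨ y)

theorem tfun_inflationary (a b y : A) : y ≤ tfun a b y := le_inf le_sup_right le_himp

theorem tfun_nucleus (a b : A) : IsNucleus (tfun a b) := by
  refine ⟨fun y z => ?_, tfun_inflationary a b, fun y => le_antisymm ?_ (tfun_inflationary a b _)⟩
  · show (b ⊔ y ⊓ z) ⊓ (a ⇨ y ⊓ z) = ((b ⊔ y) ⊓ (a ⇨ y)) ⊓ ((b ⊔ z) ⊓ (a ⇨ z))
    rw [sup_inf_left, himp_inf_distrib]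
    ac_rfl
  · show (b ⊔ tfun a b y) ⊓ (a ⇨ tfun a b y) ≤ (b ⊔ y) ⊓ (a ⇨ y)
    refine le_inf (inf_le_left.trans (sup_le le_sup_left inf_le_left)) ?_
    rw [le_himp_iff]
    have h1 : ((b ⊔ tfun a b y) ⊓ (a ⇨ tfun a b y)) ⊓ a ≤ tfun a b y :=
      (inf_le_inf_right a inf_le_right).trans himp_inf_le
    have h2 : ((b ⊔ tfun a b y) ⊓ (a ⇨ tfun a b y)) ⊓ a ≤ tfun a b y ⊓ a :=
      le_inf h1 inf_le_right
    exact h2.trans ((inf_le_inf_right a inf_le_right).trans himp_inf_le)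

theorem tfun_le_nuc {j : A → A} (hj : IsNucleus j) (a y : A) : tfun a (j a) y ≤ j y := by
  show (j a ⊔ y) ⊓ (a ⇨ y) ≤ j y
  rw [inf_sup_right]
  refine sup_le ?_ (inf_le_left.trans (hj.2.1 y))
  have h1 : j a ⊓ (a ⇨ y) ≤ j a ⊓ j (a ⇨ y) := inf_le_inf_left _ (hj.2.1 _)
  have h2 : j a ⊓ j (a ⇨ y) = j (a ⊓ (a ⇨ y)) := (hj.1 a _).symm
  exact (h1.trans h2.le).trans (nuc_mono hj (pinch a y))

theorem tfun_disj {a b c d : A} (h : b ≤ c) (y : A) : tfun a b y ⊓ tfun c d y ≤ y := by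
  have h1 : tfun a b y ⊓ tfun c d y ≤ (b ⊔ y) ⊓ (b ⇨ y) :=
    le_inf (inf_le_left.trans inf_le_left)
      ((inf_le_right.trans inf_le_right).trans (himp_le_himp_right h))
  refine h1.trans ?_
  rw [inf_sup_right]
  exact sup_le (pinch b y) inf_le_left

/-- The complementary nucleus `c_a ⊔ u_b`. -/
def kfun (a b y : A) : A := b ⇨ (a ⊔ y)

theorem kfun_inflationary (a b y : A) : y ≤ kfun a b y :=
  le_himp_iff.mpr (inf_le_left.trans le_sup_right)

theorem kfun_nucleus (a b : A) : IsNucleus (kfun a b) := by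
  refine ⟨fun y z => ?_, kfun_inflationary a b, fun y => le_antisymm ?_ (kfun_inflationary a b _)⟩
  · show b ⇨ (a ⊔ y ⊓ z) = (b ⇨ (a ⊔ y)) ⊓ (b ⇨ (a ⊔ z))
    rw [sup_inf_left, himp_inf_distrib]
  · show b ⇨ (a ⊔ kfun a b y) ≤ b ⇨ (a ⊔ y)
    rw [le_himp_iff]
    calc (b ⇨ (a ⊔ kfun a b y)) ⊓ b ≤ (a ⊔ kfun a b y) ⊓ b := le_inf himp_inf_le inf_le_right
      _ = a ⊓ b ⊔ kfun a b y ⊓ b := inf_sup_right a _ b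
      _ ≤ a ⊔ y := sup_le (inf_le_left.trans le_sup_left) himp_inf_le

theorem glb_aux (a b y : A) : tfun a b y ⊓ kfun a b y ≤ y := by
  have hm1 : tfun a b y ⊓ kfun a b y ≤ b ⊔ y := inf_le_left.trans inf_le_left
  have h1 : tfun a b y ⊓ kfun a b y ⊓ b ≤ y := by
    have ha : tfun a b y ⊓ kfun a b y ⊓ b ≤ a ⊔ y :=
      (inf_le_inf_right b inf_le_right).trans himp_inf_le
    have hb : tfun a b y ⊓ kfun a b y ⊓ b ≤ a ⇨ y :=
      inf_le_left.trans (inf_le_left.trans inf_le_right)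
    calc tfun a b y ⊓ kfun a b y ⊓ b ≤ (a ⊔ y) ⊓ (a ⇨ y) := le_inf ha hb
      _ = a ⊓ (a ⇨ y) ⊔ y ⊓ (a ⇨ y) := inf_sup_right a y _
      _ ≤ y := sup_le (pinch a y) inf_le_left
  calc tfun a b y ⊓ kfun a b y = (tfun a b y ⊓ kfun a b y) ⊓ (b ⊔ y) := (inf_eq_left.mpr hm1).symm
    _ = (tfun a b y ⊓ kfun a b y) ⊓ b ⊔ (tfun a b y ⊓ kfun a b y) ⊓ y := inf_sup_left _ b y
    _ ≤ y := sup_le h1 inf_le_right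

/-- The nucleus `x ↦ (x ⇨ a) ⇨ a`. -/
def wfun (a x : A) : A := (x ⇨ a) ⇨ a

theorem wfun_mono (a : A) {x y : A} (h : x ≤ y) : wfun a x ≤ wfun a y :=
  himp_le_himp_right (himp_le_himp_right h)

theorem wfun_inflationary (a x : A) : x ≤ wfun a x := le_himp_iff.mpr (pinch x a)

theorem wfun_nucleus (a : A) : IsNucleus (wfun a) := by
  have key : ∀ x : A, wfun a x ⇨ a = x ⇨ a := by
    intro x
    refine le_antisymm (himp_le_himp_right (wfun_inflationary a x)) ?_
    rw [le_himp_iff, inf_comm]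
    exact himp_inf_le
  refine ⟨fun x y => le_antisymm (le_inf (wfun_mono a inf_le_left) (wfun_mono a inf_le_right)) ?_,
    wfun_inflationary a, fun x => ?_⟩
  · show wfun a x ⊓ wfun a y ≤ (x ⊓ y ⇨ a) ⇨ a
    rw [le_himp_iff]
    have hxy : (x ⊓ y ⇨ a) ⊓ x ≤ y ⇨ a := by
      rw [le_himp_iff, inf_assoc]
      exact himp_inf_le
    have step1 : wfun a y ⊓ (x ⊓ y ⇨ a) ≤ x ⇨ a := by
      rw [le_himp_iff]
      calc wfun a y ⊓ (x ⊓ y ⇨ a) ⊓ x ≤ wfun a y ⊓ ((x ⊓ y ⇨ a) ⊓ x) := (inf_assoc _ _ _).le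
        _ ≤ wfun a y ⊓ (y ⇨ a) := inf_le_inf_left _ hxy
        _ ≤ a := himp_inf_le
    calc wfun a x ⊓ wfun a y ⊓ (x ⊓ y ⇨ a) ≤ wfun a x ⊓ (wfun a y ⊓ (x ⊓ y ⇨ a)) :=
          (inf_assoc _ _ _).le
      _ ≤ wfun a x ⊓ (x ⇨ a) := inf_le_inf_left _ step1
      _ ≤ a := himp_inf_le
  · show (wfun a x ⇨ a) ⇨ a = wfun a x
    rw [key x]
    rfl

theorem pair_glb (k k' : Nuc A) (h : ∀ y, k.1 y ⊓ k'.1 y ≤ y) : IsGLB {k, k'} (idNuc A) := by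
  constructor
  · intro t ht
    rcases ht with rfl | rfl
    · exact fun y => t.2.2.1 y
    · exact fun y => t.2.2.1 y
  · intro n hn
    have h1 : n ≤ k := hn (Set.mem_insert _ _)
    have h2 : n ≤ k' := hn (Set.mem_insert_of_mem _ rfl)
    intro y
    exact (le_inf (h1 y) (h2 y)).trans (h y)

theorem pair_lub (k k' : Nuc A)
    (h : ∀ n : Nuc A, k ≤ n → k' ≤ n → ∀ x, (⊤ : A) ≤ n.1 x) :
    IsLUB {k, k'} (topNuc A) := by
  constructor
  · intro t _ y
    exact le_top
  · intro n hn x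
    exact h n (hn (Set.mem_insert _ _)) (hn (Set.mem_insert_of_mem _ rfl)) x

theorem tfun_complemented (j : Nuc A) (a : A) :
    NucComplemented (⟨tfun a (j.1 a), tfun_nucleus a (j.1 a)⟩ : Nuc A) := by
  refine ⟨⟨kfun a (j.1 a), kfun_nucleus a (j.1 a)⟩,
    pair_glb _ _ (fun y => glb_aux a (j.1 a) y), pair_lub _ _ ?_⟩
  intro n h1 h2 x
  have hn := n.2
  -- step 1 : a ⊔ x ≤ n x
  have s1 : a ⊔ x ≤ n.1 x := le_himp.trans (h2 x)
  -- step 2 : j a ⊔ x ≤ n x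
  have s2 : j.1 a ⊔ x ≤ n.1 x := by
    have hk : j.1 a ⊔ x ≤ tfun a (j.1 a) (a ⊔ x) :=
      le_inf (sup_le le_sup_left (le_sup_right.trans le_sup_right))
        (le_himp_iff.mpr (inf_le_right.trans le_sup_left))
    exact hk.trans ((h1 (a ⊔ x)).trans ((nuc_mono hn s1).trans (hn.2.2 x).le))
  -- step 3 : ⊤ ≤ n x
  have hk' : (⊤ : A) ≤ kfun a (j.1 a) (j.1 a ⊔ x) :=
    le_himp_iff.mpr (inf_le_right.trans (le_sup_left.trans le_sup_right))
  exact hk'.trans ((h2 (j.1 a ⊔ x)).trans ((nuc_mono hn s2).trans (hn.2.2 x).le))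

theorem zero_dim (j : Nuc A) :
    ∃ S : Set (Nuc A), (∀ k ∈ S, NucComplemented k) ∧ IsLUB S j := by
  refine ⟨Set.range (fun a : A => (⟨tfun a (j.1 a), tfun_nucleus a (j.1 a)⟩ : Nuc A)),
    ?_, ?_, ?_⟩
  · rintro k ⟨a, rfl⟩
    exact tfun_complemented j a
  · rintro k ⟨a, rfl⟩
    exact fun y => tfun_le_nuc j.2 a y
  · intro n hn x
    have h := hn (Set.mem_range_self x)
    have hx : tfun x (j.1 x) x = j.1 x := by
      show (j.1 x ⊔ x) ⊓ (x ⇨ x) = j.1 x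
      rw [himp_self, inf_top_eq, sup_eq_left.mpr (j.2.2.1 x)]
    calc j.1 x = tfun x (j.1 x) x := hx.symm
      _ ≤ n.1 x := h x

end Aux

/-- Transfinite iteration of `g` starting from `⊥` (each value is `g` of the sup of all
earlier values). -/
noncomputable def iter {A : Type u} [Order.Frame A] (g : A → A) (o : Ordinal.{u}) : A :=
  g (sSup {x | ∃ i : Set.Iio o, iter g i = x})
termination_by o
decreasing_by exact i.2

theorem iter_eq {A : Type u} [Order.Frame A] (g : A → A) (o : Ordinal.{u}) :
    iter g o = g (sSup {x | ∃ i : Set.Iio o, iter g ↑i = x}) := by rw [iter]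

/-- The frame of all nuclei on a frame `A` is zero-dimensional (every nucleus is a supremum of
complemented nuclei) and ultraparacompact (every set of nuclei with supremum the top nucleus
refines to a pairwise disjoint such set). -/
theorem stmt_3 {A : Type u} [Order.Frame A] :
    (∀ j : Nuc A, ∃ S : Set (Nuc A), (∀ k ∈ S, NucComplemented k) ∧ IsLUB S j) ∧
    ∀ S : Set (Nuc A), IsLUB S (topNuc A) →
      ∃ T : Set (Nuc A), (∀ t ∈ T, ∃ s ∈ S, t ≤ s) ∧
        (∀ t₁ ∈ T, ∀ t₂ ∈ T, t₁ ≠ t₂ → IsGLB {t₁, t₂} (idNuc A)) ∧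
        IsLUB T (topNuc A) := by
  constructor
  · exact fun j => zero_dim j
  · intro S hS
    rcases S.eq_empty_or_nonempty with hSe | ⟨s₀, hs₀⟩
    · exact ⟨∅, by simp, by simp, hSe ▸ hS⟩
    -- Every element fixed by all members of S is ⊤.
    have L1 : ∀ a : A, (∀ s ∈ S, s.1 a = a) → a = ⊤ := by
      intro a ha
      have hw : (⟨wfun a, wfun_nucleus a⟩ : Nuc A) ∈ upperBounds S := by
        intro s hs y
        show s.1 y ≤ (y ⇨ a) ⇨ a
        rw [le_himp_iff]
        have h1 : s.1 y ⊓ (y ⇨ a) ≤ s.1 y ⊓ s.1 (y ⇨ a) := inf_le_inf_left _ (s.2.2.1 _)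
        have h2 : s.1 y ⊓ s.1 (y ⇨ a) = s.1 (y ⊓ (y ⇨ a)) := (s.2.1 y _).symm
        calc s.1 y ⊓ (y ⇨ a) ≤ s.1 (y ⊓ (y ⇨ a)) := h1.trans h2.le
          _ ≤ s.1 a := nuc_mono s.2 (pinch y a)
          _ = a := ha s hs
      have htop := hS.2 hw a
      have h3 : wfun a a = a := by
        show (a ⇨ a) ⇨ a = a
        rw [himp_self, top_himp]
      exact top_le_iff.mp (h3 ▸ htop)
    -- A choice function: each `a` is sent to `s a` for some `s ∈ S` moving `a` (if possible).
    have hgex : ∀ a : A, ∃ b : A, a ≤ b ∧ (b = a → a = ⊤) ∧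
        ∃ s ∈ S, ∀ y, (b ⊔ y) ⊓ (a ⇨ y) ≤ s.1 y := by
      intro a
      by_cases h : ∃ s ∈ S, s.1 a ≠ a
      · obtain ⟨s, hsS, hsa⟩ := h
        exact ⟨s.1 a, s.2.2.1 a, fun hb => absurd hb hsa, s, hsS, fun y => tfun_le_nuc s.2 a y⟩
      · push_neg at h
        have ha : a = ⊤ := L1 a h
        subst ha
        refine ⟨⊤, le_rfl, fun _ => rfl, s₀, hs₀, fun y => ?_⟩
        calc (⊤ ⊔ y) ⊓ ((⊤ : A) ⇨ y) ≤ (⊤ : A) ⇨ y := inf_le_right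
          _ = y := top_himp
          _ ≤ s₀.1 y := s₀.2.2.1 y
    choose g hg1 hg2 sf hsf hle using hgex
    have hIter : ∀ o : Ordinal.{u}, iter g o = g (sSup {x | ∃ i : Set.Iio o, iter g ↑i = x}) :=
      iter_eq g
    have hle_m : ∀ o : Ordinal.{u}, sSup {x | ∃ i : Set.Iio o, iter g ↑i = x} ≤ iter g o := by
      intro o
      rw [hIter o]
      exact hg1 _
    have hmem : ∀ {i o : Ordinal.{u}}, i < o →
        iter g i ≤ sSup {x | ∃ i' : Set.Iio o, iter g ↑i' = x} :=
      fun h => le_sSup ⟨⟨_, h⟩, rfl⟩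
    -- The iteration reaches ⊤.
    have hninj : ¬ Function.Injective (iter g) := fun hinj =>
      not_small_ordinal.{u, u} (small_of_injective hinj)
    obtain ⟨θ, hθ⟩ : ∃ θ : Ordinal.{u}, iter g θ = ⊤ := by
      rw [Function.not_injective_iff] at hninj
      obtain ⟨i, j, heq, hne⟩ := hninj
      have key : ∀ i j : Ordinal.{u}, i < j → iter g i = iter g j → iter g j = ⊤ := by
        intro i j hij heq
        have h1 : iter g j ≤ sSup {x | ∃ i' : Set.Iio j, iter g ↑i' = x} := by
          rw [← heq]
          exact hmem hij
        have h3 : sSup {x | ∃ i' : Set.Iio j, iter g ↑i' = x} = iter g j :=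
          le_antisymm (hle_m j) h1
        have h4 : sSup {x | ∃ i' : Set.Iio j, iter g ↑i' = x} = ⊤ :=
          hg2 _ (by rw [← hIter j]; exact h3.symm)
        rw [← h3, h4]
      rcases hne.lt_or_gt with h | h
      · exact ⟨j, key i j h heq⟩
      · exact ⟨i, key j i h heq.symm⟩
    -- The disjoint refinement.
    refine ⟨Set.range (fun o : Ordinal.{u} =>
      (⟨tfun (sSup {x | ∃ i : Set.Iio o, iter g ↑i = x}) (iter g o),
        tfun_nucleus _ _⟩ : Nuc A)), ?_, ?_, ?_⟩
    · rintro t ⟨o, rfl⟩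
      refine ⟨sf (sSup {x | ∃ i : Set.Iio o, iter g ↑i = x}),
        hsf _, fun y => ?_⟩
      show tfun (sSup {x | ∃ i : Set.Iio o, iter g ↑i = x}) (iter g o) y ≤ _
      show (iter g o ⊔ y) ⊓ (sSup {x | ∃ i : Set.Iio o, iter g ↑i = x} ⇨ y) ≤ _
      rw [hIter o]
      exact hle _ y
    · rintro t₁ ⟨o₁, rfl⟩ t₂ ⟨o₂, rfl⟩ hne
      have hne' : o₁ ≠ o₂ := fun h => hne (by rw [h])
      rcases hne'.lt_or_gt with h | h
      · exact pair_glb _ _ (fun y => tfun_disj (hmem h) y)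
      · rw [Set.pair_comm]
        exact pair_glb _ _ (fun y => tfun_disj (hmem h) y)
    · constructor
      · rintro t ⟨o, rfl⟩ y
        exact le_top
      · intro n hn x
        have ha : ∀ o : Ordinal.{u}, iter g o ≤ n.1 x := by
          intro o
          induction o using Ordinal.induction with
          | _ o IH =>
            have hma : sSup {x' | ∃ i : Set.Iio o, iter g ↑i = x'} ≤ n.1 x := by
              apply sSup_le
              rintro x' ⟨⟨i, hi⟩, rfl⟩
              exact IH i hi
            have ht := hn (Set.mem_range_self o)
            have hfix : tfun (sSup {x' | ∃ i : Set.Iio o, iter g ↑i = x'}) (iter g o) (n.1 x)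
                ≤ n.1 x := by
              have h1 := ht (n.1 x)
              rw [n.2.2.2 x] at h1
              exact h1
            have h2 : iter g o ≤
                tfun (sSup {x' | ∃ i : Set.Iio o, iter g ↑i = x'}) (iter g o) (n.1 x) :=
              le_inf le_sup_left (le_himp_iff.mpr (inf_le_right.trans hma))
            exact h2.trans hfix
        have hfin := ha θ
        rw [hθ] at hfin
        exact hfin
end

section
/- Let A be a frame. Call a binary relation R on A an order-congruence if: (1) a ≤ b implies R a b; (2) R is transitive; (3) R a b implies R (c ⊓ a) (c ⊓ b) for every c; and (4) for every subset S ⊆ A and b ∈ A, if R a b for all a ∈ S then R (sSup S) b. Then the map sending a nucleus j on A to the relation R_j, defined by R_j a b iff a ≤ j(b), is a bijection from the nuclei on A onto the order-congruences on A, with inverse sending R to the nucleus b ↦ sSup {a | R a b}; moreover j ≤ j' pointwise if and only if R_j ⊆ R_{j'}. -/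
universe u

/-- An order-congruence on a frame `A`: a relation containing `≤`, transitive, stable under
binary meets, and such that suprema in `A` are still suprema with respect to it. -/
def IsOrderCongruence {A : Type u} [Order.Frame A] (R : A → A → Prop) : Prop :=
  (∀ a b : A, a ≤ b → R a b) ∧
  (∀ a b c : A, R a b → R b c → R a c) ∧
  (∀ a b c : A, R a b → R (c ⊓ a) (c ⊓ b)) ∧
  (∀ (S : Set A) (b : A), (∀ a ∈ S, R a b) → R (sSup S) b)

/-- The map `j ↦ (R_j : a b ↦ a ≤ j b)` is a bijection from the nuclei on a frame `A` onto the
order-congruences on `A`, with inverse `R ↦ (b ↦ sSup {a | R a b})`; moreover `j ≤ j'` pointwise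
iff `R_j ⊆ R_{j'}`. -/
theorem stmt_4 {A : Type u} [Order.Frame A] :
    (∀ j : A → A, IsNucleus j → IsOrderCongruence fun a b => a ≤ j b) ∧
    (∀ R : A → A → Prop, IsOrderCongruence R → IsNucleus fun b => sSup {a | R a b}) ∧
    (∀ j : A → A, IsNucleus j → (fun b => sSup {a | a ≤ j b}) = j) ∧
    (∀ R : A → A → Prop, IsOrderCongruence R →
      ∀ a b : A, R a b ↔ a ≤ sSup {a' | R a' b}) ∧
    (∀ j j' : A → A, IsNucleus j → IsNucleus j' →
      ((∀ a : A, j a ≤ j' a) ↔ ∀ a b : A, a ≤ j b → a ≤ j' b)) := by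
  constructor
  · rintro j ⟨hmeet, hinfl, hidem⟩
    refine ⟨fun a b hab => hab.trans (hinfl b), fun a b c hab hbc => ?_,
      fun a b c hab => ?_, fun S b h => sSup_le h⟩
    · have : j b ≤ j c := by
        have := hmeet b (j c)
        rw [inf_eq_left.2 hbc] at this
        calc j b = j b ⊓ j (j c) := by rw [← this]
          _ ≤ j (j c) := inf_le_right
          _ = j c := hidem c
      exact hab.trans this
    · calc c ⊓ a ≤ j c ⊓ j b := inf_le_inf (hinfl c) hab
        _ = j (c ⊓ b) := (hmeet c b).symm
  constructor
  · rintro R ⟨hle, htrans, hmeet, hsup⟩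
    have hR : ∀ b : A, R (sSup {a | R a b}) b := fun b => hsup _ _ fun a ha => ha
    have hmono : ∀ a b : A, a ≤ b → sSup {x | R x a} ≤ sSup {x | R x b} := by
      intro a b hab
      exact sSup_le fun x hx => le_sSup (htrans x a b hx (hle a b hab))
    refine ⟨fun a b => ?_, fun a => le_sSup (hle a a le_rfl), fun a => ?_⟩
    · apply le_antisymm
      · exact le_inf (hmono _ _ inf_le_left) (hmono _ _ inf_le_right)
      · apply le_sSup
        show R _ _
        have h1 : R (sSup {x | R x b} ⊓ sSup {x | R x a}) (sSup {x | R x b} ⊓ a) :=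
          hmeet _ _ _ (hR a)
        have h2 : R (a ⊓ sSup {x | R x b}) (a ⊓ b) := hmeet _ _ _ (hR b)
        have h3 : R (sSup {x | R x a} ⊓ sSup {x | R x b}) (a ⊓ sSup {x | R x b}) := by
          rw [inf_comm (sSup {x | R x a})]
          exact htrans _ _ _ h1 (hle _ _ (le_of_eq (inf_comm _ _)))
        exact htrans _ _ _ h3 h2
    · apply le_antisymm
      · exact sSup_le fun x hx => le_sSup (htrans x _ a hx (hR a))
      · exact le_sSup (hle _ _ le_rfl)
  refine ⟨fun j hj => ?_, fun R hR a b => ?_, fun j j' hj hj' => ?_⟩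
  · funext b
    exact le_antisymm (sSup_le fun x hx => hx) (le_sSup (le_refl (j b)))
  · constructor
    · exact fun h => le_sSup h
    · intro h
      exact hR.2.1 a _ b (hR.1 a _ h) (hR.2.2.2 _ _ fun x hx => hx)
  · exact ⟨fun h a b hab => hab.trans (h b), fun h a => h (j a) a le_rfl⟩
end

section
/- Let A, B, C, D be Boolean algebras and f : A → B, g : A → C, i₁ : B → D, i₂ : C → D Boolean algebra homomorphisms with i₁ ∘ f = i₂ ∘ g, and suppose the square is a pushout: for every Boolean algebra E and homomorphisms j₁ : B → E, j₂ : C → E with j₁ ∘ f = j₂ ∘ g there is a unique homomorphism h : D → E with h ∘ i₁ = j₁ and h ∘ i₂ = j₂. Then for all b ∈ B and c ∈ C with i₁(b) ≤ i₂(c), there exists a ∈ A with b ≤ f(a) and g(a) ≤ c. -/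
universe u

open Order

/-- The complement of a prime ideal in a Boolean algebra gives a bounded lattice hom to `Prop`. -/
noncomputable def primeIdealHomAux {P : Type*} [BooleanAlgebra P] (J : Order.Ideal P)
    (hJ : Order.Ideal.IsPrime J) : BoundedLatticeHom P Prop where
  toFun x := x ∉ J
  map_sup' x y := by
    have := hJ.toIsProper
    simp only [sup_Prop_eq, eq_iff_iff, Ideal.sup_mem_iff]
    tauto
  map_inf' x y := by
    simp only [inf_Prop_eq, eq_iff_iff]
    constructor
    · intro hxy
      constructor
      · exact fun hx => hxy (J.lower inf_le_left hx)
      · exact fun hy => hxy (J.lower inf_le_right hy)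
    · rintro ⟨hx, hy⟩ hxy
      rcases hJ.mem_or_mem hxy with h | h
      · exact hx h
      · exact hy h
  map_top' := by
    have := hJ.toIsProper
    rw [eq_iff_iff]
    exact iff_of_true (Ideal.IsProper.top_notMem this) trivial
  map_bot' := by
    rw [eq_iff_iff]
    exact iff_of_false (not_not_intro J.bot_mem) not_false

/-- The diagonal bounded lattice hom from `Prop` into `ι → Prop`. -/
def diagHomAux (ι : Type*) : BoundedLatticeHom Prop (ι → Prop) where
  toFun p := fun _ => p
  map_sup' _ _ := rfl
  map_inf' _ _ := rfl
  map_top' := rfl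
  map_bot' := rfl

/-- **Interpolation for pushouts of Boolean algebras** (LaGrange). Given a pushout square of
Boolean algebra homomorphisms `i₁ ∘ f = i₂ ∘ g`, if `i₁ b ≤ i₂ c` then there is `a` with
`b ≤ f a` and `g a ≤ c`. -/
theorem stmt_5 {A B C D : Type u} [BooleanAlgebra A] [BooleanAlgebra B] [BooleanAlgebra C]
    [BooleanAlgebra D] (f : BoundedLatticeHom A B) (g : BoundedLatticeHom A C)
    (i₁ : BoundedLatticeHom B D) (i₂ : BoundedLatticeHom C D)
    (hcomm : i₁.comp f = i₂.comp g)
    (hpushout : ∀ (E : Type u) [BooleanAlgebra E] (j₁ : BoundedLatticeHom B E)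
      (j₂ : BoundedLatticeHom C E), j₁.comp f = j₂.comp g →
        ∃! h : BoundedLatticeHom D E, h.comp i₁ = j₁ ∧ h.comp i₂ = j₂)
    (b : B) (c : C) (hbc : i₁ b ≤ i₂ c) :
    ∃ a : A, b ≤ f a ∧ g a ≤ c := by
  by_contra hno
  push_neg at hno
  -- the ideal of elements of `B` below some `f a` with `g a ≤ c`
  have hJB0 : IsIdeal {x : B | ∃ a : A, g a ≤ c ∧ x ≤ f a} := by
    constructor
    · rintro x y hyx ⟨a, ha, hx⟩
      exact ⟨a, ha, hyx.trans hx⟩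
    · exact ⟨⊥, ⊥, by simp, bot_le⟩
    · rintro x ⟨a₁, ha₁, hx⟩ y ⟨a₂, ha₂, hy⟩
      refine ⟨x ⊔ y, ⟨a₁ ⊔ a₂, ?_, ?_⟩, le_sup_left, le_sup_right⟩
      · rw [map_sup]; exact sup_le ha₁ ha₂
      · rw [map_sup]; exact sup_le (hx.trans le_sup_left) (hy.trans le_sup_right)
  set JB0 : Ideal B := hJB0.toIdeal with hJB0def
  have hdisj1 : Disjoint ((PFilter.principal b : PFilter B) : Set B) (JB0 : Set B) := by
    rw [Set.disjoint_left]
    rintro x hx ⟨a, ha, hxa⟩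
    have hbx : b ≤ x := hx
    exact hno a (hbx.trans hxa) ha
  obtain ⟨J, Jprime, hJ0J, hJdisj⟩ :=
    DistribLattice.prime_ideal_of_disjoint_filter_ideal hdisj1
  have hbJ : b ∉ J := by
    intro hb
    exact Set.disjoint_left.1 hJdisj (PFilter.mem_principal.2 le_rfl) hb
  have hfJ : ∀ a : A, g a ≤ c → f a ∈ J := fun a ha =>
    hJ0J ⟨a, ha, le_rfl⟩
  -- the filter of elements of `C` above some `g a` with `f a ∉ J`
  have hG0 : IsPFilter {y : C | ∃ a : A, f a ∉ J ∧ g a ≤ y} := by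
    have hproper := Jprime.toIsProper
    refine IsPFilter.of_def ?_ ?_ ?_
    · refine ⟨⊤, ⊤, ?_, le_top⟩
      rw [map_top]
      exact Ideal.IsProper.top_notMem hproper
    · rintro y₁ ⟨a₁, ha₁, hy₁⟩ y₂ ⟨a₂, ha₂, hy₂⟩
      refine ⟨y₁ ⊓ y₂, ⟨a₁ ⊓ a₂, ?_, ?_⟩, inf_le_left, inf_le_right⟩
      · rw [map_inf]
        intro hmem
        rcases Jprime.mem_or_mem hmem with h | h
        · exact ha₁ h
        · exact ha₂ h
      · rw [map_inf]; exact inf_le_inf hy₁ hy₂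
    · rintro y₁ y₂ h12 ⟨a, ha, hy⟩
      exact ⟨a, ha, hy.trans h12⟩
  set G0 : PFilter C := hG0.toPFilter with hG0def
  have hdisj2 : Disjoint ((G0 : PFilter C) : Set C) ((Ideal.principal c : Ideal C) : Set C) := by
    rw [Set.disjoint_left]
    rintro y ⟨a, ha, hy⟩ hyc
    have hyc' : y ≤ c := hyc
    exact ha (hfJ a (hy.trans hyc'))
  obtain ⟨K, Kprime, hKc, hKdisj⟩ :=
    DistribLattice.prime_ideal_of_disjoint_filter_ideal hdisj2
  have hcK : c ∈ K := hKc Ideal.mem_principal_self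
  -- compatibility
  have compat : ∀ a : A, (f a ∉ J) ↔ (g a ∉ K) := by
    intro a
    constructor
    · intro ha hK
      exact Set.disjoint_left.1 hKdisj (⟨a, ha, le_rfl⟩ : g a ∈ G0) hK
    · intro hga hfa
      apply hga
      -- f a ∈ J ⇒ (f a)ᶜ ∉ J ⇒ f (aᶜ) ∉ J ⇒ g (aᶜ) ∉ K ⇒ (g a)ᶜ ∉ K ⇒ g a ∈ K
      have hcompl : (f a)ᶜ ∉ J := by
        intro hc
        have : (⊤ : B) ∈ J := by
          have := Ideal.sup_mem hfa hc
          rwa [sup_compl_eq_top] at this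
        exact Ideal.IsProper.top_notMem Jprime.toIsProper this
      have hfac : f aᶜ ∉ J := by rwa [map_compl']
      have hgac : g aᶜ ∉ K := by
        intro hK
        exact Set.disjoint_left.1 hKdisj (⟨aᶜ, hfac, le_rfl⟩ : g aᶜ ∈ G0) hK
      rw [map_compl'] at hgac
      exact Kprime.mem_or_compl_mem.resolve_right hgac
  -- build the test algebra
  let E : Type u := PUnit.{u + 1} → Prop
  let j₁ : BoundedLatticeHom B E := (diagHomAux PUnit.{u + 1}).comp (primeIdealHomAux J Jprime)
  let j₂ : BoundedLatticeHom C E := (diagHomAux PUnit.{u + 1}).comp (primeIdealHomAux K Kprime)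
  have hcomp : j₁.comp f = j₂.comp g := by
    ext a u
    exact compat a
  obtain ⟨h, ⟨h1, h2⟩, -⟩ := hpushout E j₁ j₂ hcomp
  have hle : j₁ b ≤ j₂ c := by
    rw [← DFunLike.congr_fun h1 b, ← DFunLike.congr_fun h2 c]
    exact OrderHomClass.mono h hbc
  exact hle PUnit.unit hbJ hcK
end

section
/- Every epimorphism in the category of Boolean algebras is surjective: if f : A → B is a Boolean algebra homomorphism such that for every Boolean algebra C and all Boolean algebra homomorphisms g, h : B → C, g ∘ f = h ∘ f implies g = h, then f is surjective. -/
universe u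

open Order

/-- The characteristic map of (the complement of) a prime ideal, as a bounded lattice
homomorphism into `Set PUnit`. -/
noncomputable def primeIdealHom {B : Type u} [BooleanAlgebra B] (J : Order.Ideal B)
    (hJ : J.IsPrime) : BoundedLatticeHom B (Set PUnit.{u+1}) where
  toFun x := {_p : PUnit | x ∉ J}
  map_sup' x y := by
    ext p
    simp only [Set.mem_setOf_eq, Set.sup_eq_union, Set.mem_union]
    constructor
    · intro h
      by_contra hc
      push_neg at hc
      exact h (J.sup_mem hc.1 hc.2)
    · rintro (h | h) hs
      · exact h (J.lower le_sup_left hs)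
      · exact h (J.lower le_sup_right hs)
  map_inf' x y := by
    ext p
    simp only [Set.mem_setOf_eq, Set.inf_eq_inter, Set.mem_inter_iff]
    constructor
    · intro h
      exact ⟨fun hx => h (J.lower inf_le_left hx), fun hy => h (J.lower inf_le_right hy)⟩
    · rintro ⟨hx, hy⟩ hs
      rcases hJ.mem_or_mem hs with h | h
      · exact hx h
      · exact hy h
  map_top' := by
    ext p
    simp only [Set.mem_setOf_eq, Set.top_eq_univ, Set.mem_univ, iff_true]
    exact hJ.toIsProper.top_notMem
  map_bot' := by
    ext p
    simp only [Set.mem_setOf_eq, Set.bot_eq_empty, Set.mem_empty_iff_false, iff_false, not_not]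
    exact J.bot_mem

theorem mem_primeIdealHom {B : Type u} [BooleanAlgebra B] (J : Order.Ideal B)
    (hJ : J.IsPrime) (x : B) : primeIdealHom J hJ x = {_p : PUnit | x ∉ J} := rfl

/-- Every epimorphism in the category of Boolean algebras is surjective. -/
theorem stmt_6 {A B : Type u} [BooleanAlgebra A] [BooleanAlgebra B]
    (f : BoundedLatticeHom A B)
    (hepi : ∀ (C : Type u) [BooleanAlgebra C] (g h : BoundedLatticeHom B C),
      g.comp f = h.comp f → g = h) :
    Function.Surjective ⇑f := by
  intro b
  by_contra hb
  push_neg at hb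
  -- the range of `f`
  set R : Set B := Set.range f with hR
  have hbR : b ∉ R := fun ⟨a, ha⟩ => hb a ha
  have htopR : (⊤ : B) ∈ R := ⟨⊤, f.map_top'⟩
  have hbotR : (⊥ : B) ∈ R := ⟨⊥, f.map_bot'⟩
  have hinfR : ∀ {u v : B}, u ∈ R → v ∈ R → u ⊓ v ∈ R := by
    rintro u v ⟨a, rfl⟩ ⟨a', rfl⟩
    exact ⟨a ⊓ a', map_inf f a a'⟩
  have hsupR : ∀ {u v : B}, u ∈ R → v ∈ R → u ⊔ v ∈ R := by
    rintro u v ⟨a, rfl⟩ ⟨a', rfl⟩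
    exact ⟨a ⊔ a', map_sup f a a'⟩
  have hcomplR : ∀ {u : B}, u ∈ R → uᶜ ∈ R := by
    rintro u ⟨a, rfl⟩
    refine ⟨aᶜ, ?_⟩
    refine (compl_unique ?_ ?_).symm
    · rw [← map_inf f, inf_compl_eq_bot, map_bot]
    · rw [← map_sup f, sup_compl_eq_top, map_top]
  -- The ideal generated by elements of `R` below `b` together with elements of `R` below `bᶜ`.
  set T : Set B := {y : B | ∃ p q : B, p ∈ R ∧ q ∈ R ∧ p ≤ b ∧ q ≤ bᶜ ∧ y ≤ p ⊔ q} with hTdef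
  have hT_ideal : IsIdeal T := by
    constructor
    · rintro y z hzy ⟨p, q, hp, hq, hpb, hqb, hyl⟩
      exact ⟨p, q, hp, hq, hpb, hqb, hzy.trans hyl⟩
    · exact ⟨⊥, ⊥, ⊥, hbotR, hbotR, bot_le, bot_le, bot_le⟩
    · rintro y ⟨p, q, hp, hq, hpb, hqb, hyl⟩ z ⟨p', q', hp', hq', hpb', hqb', hzl⟩
      refine ⟨y ⊔ z, ⟨p ⊔ p', q ⊔ q', hsupR hp hp', hsupR hq hq',
        sup_le hpb hpb', sup_le hqb hqb', ?_⟩, le_sup_left, le_sup_right⟩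
      calc y ⊔ z ≤ (p ⊔ q) ⊔ (p' ⊔ q') := sup_le_sup hyl hzl
        _ = (p ⊔ p') ⊔ (q ⊔ q') := sup_sup_sup_comm p q p' q'
  have hTtop : (⊤ : B) ∉ T := by
    rintro ⟨p, q, hp, hq, hpb, hqb, htop⟩
    apply hbR
    have h2 : qᶜ ≤ p := by
      calc qᶜ = qᶜ ⊓ (p ⊔ q) := by rw [le_antisymm le_top htop, inf_top_eq]
        _ = (qᶜ ⊓ p) ⊔ (qᶜ ⊓ q) := inf_sup_left qᶜ p q
        _ = qᶜ ⊓ p := by rw [compl_inf_eq_bot, sup_bot_eq]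
        _ ≤ p := inf_le_right
    have h3 : b ≤ qᶜ := le_compl_comm.mp hqb
    have : b = p := le_antisymm (h3.trans h2) hpb
    rw [this]; exact hp
  -- Get a prime ideal `Q` of `B` containing `T`.
  obtain ⟨Q, hQprime, hTQ, hQdisj⟩ :=
    DistribLattice.prime_ideal_of_disjoint_filter_ideal
      (F := PFilter.principal (⊤ : B)) (I := hT_ideal.toIdeal)
      (by
        rw [Set.disjoint_left]
        intro x hxF hxT
        have hx : (⊤ : B) ≤ x := (PFilter.mem_principal).mp hxF
        have : x = ⊤ := le_antisymm le_top hx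
        rw [this] at hxT
        exact hTtop hxT)
  have hTQ' : ∀ {y : B}, y ∈ T → y ∈ Q := fun hy => hTQ hy
  have hQtop : (⊤ : B) ∉ Q := by
    intro h
    exact Set.disjoint_left.mp hQdisj (PFilter.mem_principal.mpr le_rfl) h
  -- The filter generated by elements of the range not in `Q`.
  set U : Set B := {y : B | ∃ u : B, u ∈ R ∧ u ∉ Q ∧ u ≤ y} with hUdef
  have hU_filter : IsPFilter U := by
    refine IsPFilter.of_def ⟨⊤, ⊤, htopR, hQtop, le_rfl⟩ ?_ ?_
    · rintro y ⟨u, hu, huQ, huy⟩ z ⟨v, hv, hvQ, hvz⟩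
      refine ⟨u ⊓ v, ⟨u ⊓ v, hinfR hu hv, ?_, le_rfl⟩,
        inf_le_left.trans huy, inf_le_right.trans hvz⟩
      intro hmem
      rcases hQprime.mem_or_mem hmem with h | h
      · exact huQ h
      · exact hvQ h
    · rintro x y hxy ⟨u, hu, huQ, hux⟩
      exact ⟨u, hu, huQ, hux.trans hxy⟩
  have hUtop : (⊤ : B) ∈ U := ⟨⊤, htopR, hQtop, le_rfl⟩
  -- A generic construction: for any `c` whose lower range-elements all lie in `T`,
  -- we find a prime ideal containing `c` with the same trace on `R` as `Q`.
  have hkey : ∀ c : B, (∀ w : B, w ∈ R → w ≤ c → w ∈ T) →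
      ∃ P : Order.Ideal B, P.IsPrime ∧ (∀ r : B, r ∈ R → (r ∈ P ↔ r ∈ Q)) ∧ c ∈ P ∧
        (⊤ : B) ∉ P := by
    intro c hc
    have hIc_ideal : IsIdeal {y : B | ∃ q : B, q ∈ R ∧ q ∈ Q ∧ y ≤ q ⊔ c} := by
      constructor
      · rintro y z hzy ⟨q, hqR, hqQ, hyl⟩
        exact ⟨q, hqR, hqQ, hzy.trans hyl⟩
      · exact ⟨⊥, ⊥, hbotR, Q.bot_mem, bot_le⟩
      · rintro y ⟨q, hqR, hqQ, hyl⟩ z ⟨q', hqR', hqQ', hzl⟩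
        refine ⟨y ⊔ z, ⟨q ⊔ q', hsupR hqR hqR', Q.sup_mem hqQ hqQ', ?_⟩,
          le_sup_left, le_sup_right⟩
        calc y ⊔ z ≤ (q ⊔ c) ⊔ (q' ⊔ c) := sup_le_sup hyl hzl
          _ = (q ⊔ q') ⊔ (c ⊔ c) := sup_sup_sup_comm q c q' c
          _ = (q ⊔ q') ⊔ c := by rw [sup_idem]
    have hdisj : Disjoint (↑hU_filter.toPFilter : Set B)
        (↑hIc_ideal.toIdeal : Set B) := by
      rw [Set.disjoint_left]
      rintro x hxU hxI
      have hxU' : x ∈ U := hxU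
      obtain ⟨u, huR, huQ, hux⟩ := hxU'
      obtain ⟨q, hqR, hqQ, hxl⟩ := hxI
      apply huQ
      have h1 : u ⊓ qᶜ ≤ c := by
        have h2 : u ≤ q ⊔ c := hux.trans hxl
        calc u ⊓ qᶜ ≤ (q ⊔ c) ⊓ qᶜ := inf_le_inf_right _ h2
          _ = (q ⊓ qᶜ) ⊔ (c ⊓ qᶜ) := inf_sup_right q c qᶜ
          _ = c ⊓ qᶜ := by rw [inf_compl_eq_bot, bot_sup_eq]
          _ ≤ c := inf_le_left
      have h3 : u ⊓ qᶜ ∈ T := hc _ (hinfR huR (hcomplR hqR)) h1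
      have h4 : u ⊓ qᶜ ∈ Q := hTQ' h3
      have h5 : u ≤ (u ⊓ qᶜ) ⊔ q := by
        calc u = u ⊓ (qᶜ ⊔ q) := by rw [compl_sup_eq_top, inf_top_eq]
          _ = (u ⊓ qᶜ) ⊔ (u ⊓ q) := inf_sup_left u qᶜ q
          _ ≤ (u ⊓ qᶜ) ⊔ q := sup_le_sup_left inf_le_right _
      exact Q.lower h5 (Q.sup_mem h4 hqQ)
    obtain ⟨P, hPprime, hIP, hPdisj⟩ :=
      DistribLattice.prime_ideal_of_disjoint_filter_ideal hdisj
    have hIP' : ∀ {y : B}, (∃ q : B, q ∈ R ∧ q ∈ Q ∧ y ≤ q ⊔ c) → y ∈ P := fun hy => hIP hy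
    refine ⟨P, hPprime, ?_, hIP' ⟨⊥, hbotR, Q.bot_mem, by rw [bot_sup_eq]⟩, ?_⟩
    · intro r hrR
      constructor
      · intro hrP
        by_contra hrQ
        have hrU : r ∈ U := ⟨r, hrR, hrQ, le_rfl⟩
        exact Set.disjoint_left.mp hPdisj hrU hrP
      · intro hrQ
        exact hIP' ⟨r, hrR, hrQ, le_sup_left⟩
    · intro h
      exact Set.disjoint_left.mp hPdisj hUtop h
  -- Apply to `b` and `bᶜ`.
  obtain ⟨P₂, hP₂, htrace₂, hbP₂, htop₂⟩ := hkey b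
    (fun w hwR hwb => ⟨w, ⊥, hwR, hbotR, hwb, bot_le, by rw [sup_bot_eq]⟩)
  obtain ⟨P₁, hP₁, htrace₁, hbcP₁, htop₁⟩ := hkey bᶜ
    (fun w hwR hwb => ⟨⊥, w, hbotR, hwR, bot_le, hwb, by rw [bot_sup_eq]⟩)
  have hbP₁ : b ∉ P₁ := by
    intro h
    apply htop₁
    have : (⊤ : B) ≤ b ⊔ bᶜ := by rw [sup_compl_eq_top]
    exact P₁.lower this (P₁.sup_mem h hbcP₁)
  -- The two homomorphisms
  have hgh := hepi (Set PUnit.{u+1}) (primeIdealHom P₁ hP₁) (primeIdealHom P₂ hP₂)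
    (by
      apply DFunLike.ext
      intro a
      show primeIdealHom P₁ hP₁ (f a) = primeIdealHom P₂ hP₂ (f a)
      rw [mem_primeIdealHom, mem_primeIdealHom]
      have hmem : f a ∈ P₁ ↔ f a ∈ P₂ := by
        rw [htrace₁ _ ⟨a, rfl⟩, htrace₂ _ ⟨a, rfl⟩]
      ext p
      simp only [Set.mem_setOf_eq]
      exact not_congr hmem)
  have h1 : PUnit.unit ∈ primeIdealHom P₁ hP₁ b := hbP₁
  have h2 : PUnit.unit ∉ primeIdealHom P₂ hP₂ b := fun h => h hbP₂
  rw [hgh] at h1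
  exact h2 h1
end

section
/- The category of Boolean algebras has the strong amalgamation property: given injective Boolean algebra homomorphisms f : A → B and g : A → C, there exist a Boolean algebra D and injective Boolean algebra homomorphisms g' : B → D and f' : C → D with g' ∘ f = f' ∘ g, such that moreover whenever g'(b) = f'(c) for b ∈ B and c ∈ C, there is a ∈ A with f(a) = b and g(a) = c. -/
universe u

namespace StrongAmalgHelper

open Order

variable {A B : Type u} [BooleanAlgebra A] [BooleanAlgebra B]

/-- An injective bounded lattice hom reflects order. -/
lemma le_of_map_le (h : BoundedLatticeHom A B) (hinj : Function.Injective ⇑h)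
    {a a' : A} (hle : h a ≤ h a') : a ≤ a' := by
  have h1 : h (a ⊓ a') = h a := by rw [map_inf]; exact inf_eq_left.2 hle
  exact inf_eq_left.1 (hinj h1)

/-- Separation: if membership in prime ideals implies, then ≤. -/
lemma le_of_forall_prime {x y : B}
    (H : ∀ J : Ideal B, J.IsPrime → y ∈ J → x ∈ J) : x ≤ y := by
  by_contra hxy
  have hd : Disjoint ((PFilter.principal x : PFilter B) : Set B)
      ((Ideal.principal y : Ideal B) : Set B) := by
    rw [Set.disjoint_left]
    intro z hzF hzI
    exact hxy (le_trans (PFilter.mem_principal.1 hzF) (Ideal.mem_principal.1 hzI))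
  obtain ⟨J, hJp, hIJ, hFJ⟩ := DistribLattice.prime_ideal_of_disjoint_filter_ideal hd
  have hyJ : y ∈ J := hIJ (Ideal.mem_principal.2 le_rfl)
  have hxJ : x ∉ J := Set.disjoint_left.1 hFJ (PFilter.mem_principal.2 le_rfl)
  exact hxJ (H J hJp hyJ)

lemma eq_of_forall_prime {x y : B}
    (H : ∀ J : Ideal B, J.IsPrime → (x ∈ J ↔ y ∈ J)) : x = y :=
  le_antisymm (le_of_forall_prime fun J hJ hy => (H J hJ).2 hy)
    (le_of_forall_prime fun J hJ hx => (H J hJ).1 hx)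

/-- Key extension lemma: given a prime ideal `W` on `A` and `b : B` satisfying a
compatibility hypothesis, there is a prime ideal `J` of `B` pulling back to `W`
and avoiding `b`. -/
lemma exists_prime_extension (h : BoundedLatticeHom A B) (W : Ideal A) (hW : W.IsPrime)
    (b : B) (hyp : ∀ a a' : A, a ∉ W → a' ∈ W → ¬(b ⊓ h a ≤ h a')) :
    ∃ J : Ideal B, J.IsPrime ∧ (∀ a : A, h a ∈ J ↔ a ∈ W) ∧ b ∉ J := by
  -- The filter generated by b together with the image of the complement of W.
  have hFpf : IsPFilter {x : B | ∃ a : A, a ∉ W ∧ b ⊓ h a ≤ x} := by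
    apply IsPFilter.of_def
    · exact ⟨b, ⊤, hW.top_notMem, by simp⟩
    · rintro x ⟨a₁, ha₁, hx⟩ y ⟨a₂, ha₂, hy⟩
      refine ⟨x ⊓ y, ⟨a₁ ⊓ a₂, ?_, ?_⟩, inf_le_left, inf_le_right⟩
      · intro hmem
        rcases hW.mem_or_mem hmem with h1 | h1
        exacts [ha₁ h1, ha₂ h1]
      · rw [map_inf]
        exact le_inf (le_trans (inf_le_inf_left b inf_le_left) hx)
          (le_trans (inf_le_inf_left b inf_le_right) hy)
    · rintro x y hxy ⟨a, ha, hx⟩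
      exact ⟨a, ha, le_trans hx hxy⟩
  -- The ideal generated by the image of W.
  have hIid : IsIdeal {x : B | ∃ a : A, a ∈ W ∧ x ≤ h a} := by
    constructor
    · rintro x y hyx ⟨a, ha, hx⟩
      exact ⟨a, ha, le_trans hyx hx⟩
    · exact ⟨⊥, ⊥, W.bot_mem, bot_le⟩
    · rintro x ⟨a₁, ha₁, hx⟩ y ⟨a₂, ha₂, hy⟩
      refine ⟨x ⊔ y, ⟨a₁ ⊔ a₂, W.sup_mem ha₁ ha₂, ?_⟩, le_sup_left, le_sup_right⟩
      rw [map_sup]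
      exact sup_le (le_trans hx le_sup_left) (le_trans hy le_sup_right)
  set F := hFpf.toPFilter with hF
  set I := hIid.toIdeal with hI
  have hFc : (F : Set B) = {x : B | ∃ a : A, a ∉ W ∧ b ⊓ h a ≤ x} := rfl
  have hIc : (I : Set B) = {x : B | ∃ a : A, a ∈ W ∧ x ≤ h a} := rfl
  have hd : Disjoint (F : Set B) (I : Set B) := by
    rw [Set.disjoint_left]
    rintro x ⟨a, ha, hx⟩ ⟨a', ha', hx'⟩
    exact hyp a a' ha ha' (le_trans hx hx')
  obtain ⟨J, hJp, hIJ, hFJ⟩ := DistribLattice.prime_ideal_of_disjoint_filter_ideal hd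
  refine ⟨J, hJp, fun a => ⟨?_, fun haW => hIJ ⟨a, haW, le_rfl⟩⟩, ?_⟩
  · intro haJ
    by_contra haW
    exact Set.disjoint_left.1 hFJ (⟨a, haW, inf_le_right⟩ : h a ∈ (F : Set B)) haJ
  · intro hbJ
    exact Set.disjoint_left.1 hFJ (⟨⊤, hW.top_notMem, by simp⟩ : b ∈ (F : Set B)) hbJ

/-- Extension along an injective map, without side condition. -/
lemma exists_prime_extension' (h : BoundedLatticeHom A B) (hinj : Function.Injective ⇑h)
    (W : Ideal A) (hW : W.IsPrime) :
    ∃ J : Ideal B, J.IsPrime ∧ (∀ a : A, h a ∈ J ↔ a ∈ W) := by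
  have hyp : ∀ a a' : A, a ∉ W → a' ∈ W → ¬((⊤ : B) ⊓ h a ≤ h a') := by
    intro a a' ha ha' hle
    rw [top_inf_eq] at hle
    exact ha (W.lower (le_of_map_le h hinj hle) ha')
  obtain ⟨J, hJp, hcomp, _⟩ := exists_prime_extension h W hW ⊤ hyp
  exact ⟨J, hJp, hcomp⟩

/-- The pullback of a prime ideal along a bounded lattice hom. -/
lemma comap_prime (h : BoundedLatticeHom A B) (J : Ideal B) (hJ : J.IsPrime) :
    ∃ W : Ideal A, W.IsPrime ∧ ∀ a : A, a ∈ W ↔ h a ∈ J := by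
  have hWid : IsIdeal {a : A | h a ∈ J} := by
    constructor
    · intro a a' ha' ha
      exact J.lower (OrderHomClass.mono h ha') ha
    · exact ⟨⊥, by simpa using J.bot_mem⟩
    · rintro a₁ ha₁ a₂ ha₂
      exact ⟨a₁ ⊔ a₂, by rw [Set.mem_setOf_eq, map_sup]; exact J.sup_mem ha₁ ha₂,
        le_sup_left, le_sup_right⟩
  refine ⟨hWid.toIdeal, ?_, fun a => Iff.rfl⟩
  have hproper : Ideal.IsProper hWid.toIdeal :=
    Ideal.isProper_of_notMem (show h ⊤ ∉ J by rw [map_top]; exact hJ.top_notMem)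
  apply Ideal.isPrime_of_mem_or_compl_mem
  intro a
  rcases hJ.mem_or_compl_mem (x := h a) with h1 | h1
  · exact Or.inl h1
  · right
    show h aᶜ ∈ J
    rwa [map_compl']

end StrongAmalgHelper

open Order StrongAmalgHelper in
/-- The category of Boolean algebras has the strong amalgamation property. -/
theorem stmt_7 {A B C : Type u} [BooleanAlgebra A] [BooleanAlgebra B] [BooleanAlgebra C]
    (f : BoundedLatticeHom A B) (g : BoundedLatticeHom A C)
    (hf : Function.Injective ⇑f) (hg : Function.Injective ⇑g) :
    ∃ (D : Type u) (_ : BooleanAlgebra D) (g' : BoundedLatticeHom B D)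
      (f' : BoundedLatticeHom C D),
      Function.Injective ⇑g' ∧ Function.Injective ⇑f' ∧ g'.comp f = f'.comp g ∧
      ∀ (b : B) (c : C), g' b = f' c → ∃ a : A, f a = b ∧ g a = c := by
  classical
  -- S : compatible pairs of prime ideals
  set S : Type u := {p : Ideal B × Ideal C //
      p.1.IsPrime ∧ p.2.IsPrime ∧ ∀ a : A, f a ∈ p.1 ↔ g a ∈ p.2} with hS
  -- every prime ideal of B occurs in a compatible pair
  have existsB : ∀ J : Ideal B, J.IsPrime → ∃ s : S, s.1.1 = J := by
    intro J hJ
    obtain ⟨W, hWp, hWc⟩ := comap_prime f J hJ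
    obtain ⟨V, hVp, hVc⟩ := exists_prime_extension' g hg W hWp
    exact ⟨⟨(J, V), hJ, hVp, fun a => by rw [← hWc a, hVc a]⟩, rfl⟩
  have existsC : ∀ V : Ideal C, V.IsPrime → ∃ s : S, s.1.2 = V := by
    intro V hV
    obtain ⟨W, hWp, hWc⟩ := comap_prime g V hV
    obtain ⟨J, hJp, hJc⟩ := exists_prime_extension' f hf W hWp
    exact ⟨⟨(J, V), hJp, hV, fun a => by rw [hJc a, hWc a]⟩, rfl⟩
  refine ⟨Set S, inferInstance, ?_⟩
  -- the two maps
  have map_g' : ∀ (b : B), True := fun _ => trivial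
  refine ⟨{ toFun := fun b => {s : S | b ∉ s.1.1}
            map_sup' := ?_, map_inf' := ?_, map_top' := ?_, map_bot' := ?_ },
          { toFun := fun c => {s : S | c ∉ s.1.2}
            map_sup' := ?_, map_inf' := ?_, map_top' := ?_, map_bot' := ?_ },
          ?_, ?_, ?_, ?_⟩
  · -- g' sup
    intro b b'
    ext s
    have : b ⊔ b' ∈ s.1.1 ↔ b ∈ s.1.1 ∧ b' ∈ s.1.1 := Ideal.sup_mem_iff
    simp only [Set.mem_setOf_eq, Set.sup_eq_union, Set.mem_union, this]
    tauto
  · -- g' inf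
    intro b b'
    ext s
    have : b ⊓ b' ∈ s.1.1 ↔ b ∈ s.1.1 ∨ b' ∈ s.1.1 :=
      ⟨fun h1 => s.2.1.mem_or_mem h1,
       fun h1 => h1.elim (s.1.1.lower inf_le_left) (s.1.1.lower inf_le_right)⟩
    simp only [Set.mem_setOf_eq, Set.inf_eq_inter, Set.mem_inter_iff, this]
    tauto
  · -- g' top
    ext s
    simp [s.2.1.top_notMem]
  · -- g' bot
    ext s
    simp [s.1.1.bot_mem]
  · -- f' sup
    intro c c'
    ext s
    have : c ⊔ c' ∈ s.1.2 ↔ c ∈ s.1.2 ∧ c' ∈ s.1.2 := Ideal.sup_mem_iff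
    simp only [Set.mem_setOf_eq, Set.sup_eq_union, Set.mem_union, this]
    tauto
  · -- f' inf
    intro c c'
    ext s
    have : c ⊓ c' ∈ s.1.2 ↔ c ∈ s.1.2 ∨ c' ∈ s.1.2 :=
      ⟨fun h1 => s.2.2.1.mem_or_mem h1,
       fun h1 => h1.elim (s.1.2.lower inf_le_left) (s.1.2.lower inf_le_right)⟩
    simp only [Set.mem_setOf_eq, Set.inf_eq_inter, Set.mem_inter_iff, this]
    tauto
  · -- f' top
    ext s
    simp [s.2.2.1.top_notMem]
  · -- f' bot
    ext s
    simp [s.1.2.bot_mem]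
  · -- injectivity of g'
    intro b b' hbb
    apply eq_of_forall_prime
    intro J hJ
    obtain ⟨s, hs⟩ := existsB J hJ
    have h1 : b ∉ s.1.1 ↔ b' ∉ s.1.1 := Set.ext_iff.1 hbb s
    rw [← hs]
    tauto
  · -- injectivity of f'
    intro c c' hcc
    apply eq_of_forall_prime
    intro V hV
    obtain ⟨s, hs⟩ := existsC V hV
    have h1 : c ∉ s.1.2 ↔ c' ∉ s.1.2 := Set.ext_iff.1 hcc s
    rw [← hs]
    tauto
  · -- commutativity
    ext a s
    exact not_iff_not.2 (s.2.2.2 a)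
  · -- strong amalgamation
    intro b c hbc
    have hiff : ∀ s : S, b ∈ s.1.1 ↔ c ∈ s.1.2 := by
      intro s
      have h1 : b ∉ s.1.1 ↔ c ∉ s.1.2 := Set.ext_iff.1 hbc s
      tauto
    -- first: b is in the range of f
    have hrange : ∃ a : A, f a = b := by
      by_contra hnr
      push_neg at hnr
      -- the separating prime ideal W on A
      have hFpf : IsPFilter {a : A | b ≤ f a} := by
        apply IsPFilter.of_def
        · exact ⟨⊤, by simp⟩
        · rintro a₁ ha₁ a₂ ha₂
          exact ⟨a₁ ⊓ a₂, by rw [Set.mem_setOf_eq, map_inf]; exact le_inf ha₁ ha₂,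
            inf_le_left, inf_le_right⟩
        · intro a₁ a₂ h12 h1
          exact le_trans h1 (OrderHomClass.mono f h12)
      have hIid : IsIdeal {a : A | f a ≤ b} := by
        constructor
        · intro a₁ a₂ h21 h1
          exact le_trans (OrderHomClass.mono f h21) h1
        · exact ⟨⊥, by simp⟩
        · rintro a₁ ha₁ a₂ ha₂
          exact ⟨a₁ ⊔ a₂, by rw [Set.mem_setOf_eq, map_sup]; exact sup_le ha₁ ha₂,
            le_sup_left, le_sup_right⟩
      have hd : Disjoint ((hFpf.toPFilter : PFilter A) : Set A)
          ((hIid.toIdeal : Ideal A) : Set A) := by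
        rw [Set.disjoint_left]
        intro a haF haI
        exact hnr a (le_antisymm haI haF)
      obtain ⟨W, hWp, hIW, hFW⟩ := DistribLattice.prime_ideal_of_disjoint_filter_ideal hd
      have hWF : ∀ a : A, b ≤ f a → a ∉ W := fun a ha =>
        Set.disjoint_left.1 hFW (show a ∈ (hFpf.toPFilter : Set A) from ha)
      have hWI : ∀ a : A, f a ≤ b → a ∈ W := fun a ha =>
        hIW (show a ∈ (hIid.toIdeal : Set A) from ha)
      have hypb : ∀ a a' : A, a ∉ W → a' ∈ W → ¬(b ⊓ f a ≤ f a') := by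
        intro a a' ha ha' hle
        have hac : aᶜ ∈ W := hWp.compl_mem_of_notMem ha
        have h0 : b \ (f a)ᶜ ≤ f a' := by rwa [sdiff_eq, compl_compl]
        have h1 : b ≤ (f a)ᶜ ⊔ f a' := sdiff_le_iff.1 h0
        have h2 : b ≤ f (aᶜ ⊔ a') := by rwa [map_sup, map_compl']
        exact hWF _ h2 (W.sup_mem hac ha')
      have hypbc : ∀ a a' : A, a ∉ W → a' ∈ W → ¬(bᶜ ⊓ f a ≤ f a') := by
        intro a a' ha ha' hle
        have hac : aᶜ ∈ W := hWp.compl_mem_of_notMem ha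
        have h0 : bᶜ \ (f a)ᶜ ≤ f a' := by rwa [sdiff_eq, compl_compl]
        have h1 : bᶜ ≤ (f a)ᶜ ⊔ f a' := sdiff_le_iff.1 h0
        have h2 : bᶜ ≤ f (aᶜ ⊔ a') := by rwa [map_sup, map_compl']
        have h3 : f ((aᶜ ⊔ a')ᶜ) ≤ b := by
          rw [map_compl']
          exact compl_le_of_compl_le h2
        have h4 : (aᶜ ⊔ a')ᶜ ∈ W := hWI _ h3
        have h5 : aᶜ ⊔ a' ∈ W := W.sup_mem hac ha'
        have h6 := W.sup_mem h5 h4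
        rw [sup_compl_eq_top] at h6
        exact hWp.top_notMem h6
      obtain ⟨J, hJp, hJc, hbJ⟩ := exists_prime_extension f W hWp b hypb
      obtain ⟨J', hJ'p, hJ'c, hbJ'⟩ := exists_prime_extension f W hWp bᶜ hypbc
      have hbJ'' : b ∈ J' := by
        rcases hJ'p.mem_or_compl_mem (x := b) with h1 | h1
        · exact h1
        · exact absurd h1 hbJ'
      obtain ⟨V, hVp, hVc⟩ := exists_prime_extension' g hg W hWp
      have h1 : b ∈ J ↔ c ∈ V := hiff ⟨(J, V), hJp, hVp, fun a => by rw [hJc a, hVc a]⟩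
      have h2 : b ∈ J' ↔ c ∈ V := hiff ⟨(J', V), hJ'p, hVp, fun a => by rw [hJ'c a, hVc a]⟩
      exact hbJ (h1.2 (h2.1 hbJ''))
    -- conclude
    obtain ⟨a, ha⟩ := hrange
    refine ⟨a, ha, ?_⟩
    apply eq_of_forall_prime
    intro V hV
    obtain ⟨s, hs⟩ := existsC V hV
    have h1 := hiff s
    have h2 := s.2.2.2 a
    rw [ha] at h2
    rw [← hs]
    exact h2.symm.trans h1
end

section
/- Every monomorphism in the category of Boolean algebras is regular: for every injective Boolean algebra homomorphism f : A → B there exist a Boolean algebra C and Boolean algebra homomorphisms g, h : B → C such that the range of f equals {b ∈ B | g(b) = h(b)}; in other words, f is an equalizer of a pair of homomorphisms. -/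
universe u

open Order

section Aux

variable {B : Type*} [BooleanAlgebra B]

/-- The characteristic homomorphism of the complement of a prime ideal. -/
def primeComplHom (J : Order.Ideal B) (hJ : J.IsPrime) : BoundedLatticeHom B Prop where
  toFun d := d ∉ J
  map_sup' d e := by
    simp only [eq_iff_iff, sup_Prop_eq]
    constructor
    · intro h
      by_contra hc
      push_neg at hc
      exact h (J.sup_mem hc.1 hc.2)
    · rintro (hd | he) hde
      · exact hd (J.lower le_sup_left hde)
      · exact he (J.lower le_sup_right hde)
  map_inf' d e := by
    simp only [eq_iff_iff, inf_Prop_eq]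
    constructor
    · intro h
      exact ⟨fun hd => h (J.lower inf_le_left hd), fun he => h (J.lower inf_le_right he)⟩
    · rintro ⟨hd, he⟩ hde
      rcases hJ.mem_or_mem hde with h' | h'
      · exact hd h'
      · exact he h'
  map_top' := eq_true hJ.toIsProper.top_notMem
  map_bot' := eq_false (not_not_intro J.bot_mem)

variable {A : Type*} [BooleanAlgebra A]

/-- Extension of a prime ideal along a Boolean algebra homomorphism, avoiding a given element. -/
theorem exists_prime_extension (f : BoundedLatticeHom A B) (P : Order.Ideal A)
    (hP : P.IsPrime) (c : B) (hc : ∀ a : A, f a ≤ cᶜ → a ∈ P) :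
    ∃ J : Order.Ideal B, J.IsPrime ∧ c ∉ J ∧ ∀ a : A, (f a ∈ J ↔ a ∈ P) := by
  classical
  -- the filter generated by `c` together with the image of the complement of `P`
  have hFpf : Order.IsPFilter {d : B | ∃ a : A, a ∉ P ∧ c ⊓ f a ≤ d} := by
    apply Order.IsPFilter.of_def
    · exact ⟨c, ⊤, hP.toIsProper.top_notMem, by simp⟩
    · rintro d ⟨a₁, ha₁, hd⟩ e ⟨a₂, ha₂, he⟩
      refine ⟨c ⊓ f (a₁ ⊓ a₂), ⟨a₁ ⊓ a₂, ?_, le_rfl⟩, ?_, ?_⟩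
      · intro hmem
        rcases hP.mem_or_mem hmem with h' | h'
        · exact ha₁ h'
        · exact ha₂ h'
      · exact le_trans (by rw [map_inf]; exact inf_le_inf_left c inf_le_left) hd
      · exact le_trans (by rw [map_inf]; exact inf_le_inf_left c inf_le_right) he
    · rintro x y hxy ⟨a, ha, hx⟩
      exact ⟨a, ha, hx.trans hxy⟩
  set F : Order.PFilter B := hFpf.toPFilter with hF
  have memF : ∀ d : B, d ∈ F ↔ ∃ a : A, a ∉ P ∧ c ⊓ f a ≤ d := fun d => Iff.rfl
  -- the ideal generated by the image of `P`
  have hIid : Order.IsIdeal {d : B | ∃ a ∈ P, d ≤ f a} := by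
    constructor
    · rintro x y hxy ⟨a, ha, hx⟩
      exact ⟨a, ha, hxy.trans hx⟩
    · exact ⟨⊥, ⊥, P.bot_mem, bot_le⟩
    · rintro d ⟨a₁, ha₁, hd⟩ e ⟨a₂, ha₂, he⟩
      exact ⟨f (a₁ ⊔ a₂), ⟨a₁ ⊔ a₂, P.sup_mem ha₁ ha₂, le_rfl⟩,
        le_trans hd (by simp only [map_sup]; exact le_sup_left),
        le_trans he (by simp only [map_sup]; exact le_sup_right)⟩
  set I : Order.Ideal B := hIid.toIdeal with hI
  have memI : ∀ d : B, d ∈ I ↔ ∃ a ∈ P, d ≤ f a := fun d => Iff.rfl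
  -- disjointness
  have hdisj : Disjoint (F : Set B) (I : Set B) := by
    rw [Set.disjoint_left]
    rintro d hdF hdI
    obtain ⟨a₁, ha₁, hd₁⟩ := (memF d).1 hdF
    obtain ⟨a₂, ha₂, hd₂⟩ := (memI d).1 hdI
    -- `f (a₁ ⊓ a₂ᶜ) ≤ cᶜ`, hence `a₁ ⊓ a₂ᶜ ∈ P`
    have key : f (a₁ ⊓ a₂ᶜ) ≤ cᶜ := by
      rw [map_inf, map_compl']
      rw [le_compl_iff_disjoint_left, disjoint_iff_inf_le]
      calc c ⊓ (f a₁ ⊓ (f a₂)ᶜ) = (c ⊓ f a₁) ⊓ (f a₂)ᶜ := by rw [inf_assoc]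
        _ ≤ f a₂ ⊓ (f a₂)ᶜ := inf_le_inf_right _ (hd₁.trans hd₂)
        _ ≤ ⊥ := by simp
    have h1 : a₁ ⊓ a₂ᶜ ∈ P := hc _ key
    have h2 : a₁ ⊓ a₂ ∈ P := P.lower inf_le_right ha₂
    have : a₁ ∈ P := by
      have : (a₁ ⊓ a₂ᶜ) ⊔ (a₁ ⊓ a₂) ∈ P := P.sup_mem h1 h2
      refine P.lower ?_ this
      rw [← inf_sup_left]
      simp
    exact ha₁ this
  obtain ⟨J, hJprime, hIJ, hJdisj⟩ := DistribLattice.prime_ideal_of_disjoint_filter_ideal hdisj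
  refine ⟨J, hJprime, ?_, ?_⟩
  · have hcF : c ∈ F := (memF c).2 ⟨⊤, hP.toIsProper.top_notMem, by simp⟩
    exact fun hcJ => Set.disjoint_left.1 hJdisj hcF hcJ
  · intro a
    constructor
    · intro hfa
      by_contra ha
      have : f a ∈ F := (memF (f a)).2 ⟨a, ha, inf_le_right⟩
      exact Set.disjoint_left.1 hJdisj this hfa
    · intro ha
      exact hIJ ((memI (f a)).2 ⟨a, ha, le_rfl⟩)

end Aux

/-- Every monomorphism in the category of Boolean algebras is regular: every injective Boolean
algebra homomorphism is an equalizer of a pair of homomorphisms. -/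
theorem stmt_8 {A B : Type u} [BooleanAlgebra A] [BooleanAlgebra B]
    (f : BoundedLatticeHom A B) (hf : Function.Injective ⇑f) :
    ∃ (C : Type u) (_ : BooleanAlgebra C) (g h : BoundedLatticeHom B C),
      Set.range ⇑f = {b : B | g b = h b} := by
  classical
  -- The codomain: functions on pairs of `Prop`-valued homomorphisms agreeing on the image of `f`.
  set S : Type u :=
    {p : BoundedLatticeHom B Prop × BoundedLatticeHom B Prop // ∀ a : A, p.1 (f a) = p.2 (f a)}
    with hS
  refine ⟨S → Prop, inferInstance,
    { toFun := fun d p => p.1.1 d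
      map_sup' := fun d e => funext fun p => map_sup p.1.1 d e
      map_inf' := fun d e => funext fun p => map_inf p.1.1 d e
      map_top' := funext fun p => map_top p.1.1
      map_bot' := funext fun p => map_bot p.1.1 },
    { toFun := fun d p => p.1.2 d
      map_sup' := fun d e => funext fun p => map_sup p.1.2 d e
      map_inf' := fun d e => funext fun p => map_inf p.1.2 d e
      map_top' := funext fun p => map_top p.1.2
      map_bot' := funext fun p => map_bot p.1.2 }, ?_⟩
  ext b
  simp only [Set.mem_range, Set.mem_setOf_eq]
  constructor
  · rintro ⟨a, rfl⟩
    exact funext fun p => p.2 a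
  · intro hb
    by_contra hbr
    push_neg at hbr
    -- the ideal of elements of `A` "decided" by `b`
    have hIAid : Order.IsIdeal {a : A | ∃ a₁ a₂ : A, a ≤ a₁ ⊔ a₂ ∧ f a₁ ≤ b ∧ f a₂ ≤ bᶜ} := by
      constructor
      · rintro x y hxy ⟨a₁, a₂, hx, h₁, h₂⟩
        exact ⟨a₁, a₂, hxy.trans hx, h₁, h₂⟩
      · exact ⟨⊥, ⊥, ⊥, by simp, by simp, by simp⟩
      · rintro x ⟨a₁, a₂, hx, h₁, h₂⟩ y ⟨a₁', a₂', hy, h₁', h₂'⟩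
        refine ⟨a₁ ⊔ a₁' ⊔ (a₂ ⊔ a₂'), ⟨a₁ ⊔ a₁', a₂ ⊔ a₂', le_rfl, ?_, ?_⟩, ?_, ?_⟩
        · simpa [map_sup] using sup_le h₁ h₁'
        · simpa [map_sup] using sup_le h₂ h₂'
        · calc x ≤ a₁ ⊔ a₂ := hx
            _ ≤ _ := sup_le_sup le_sup_left le_sup_left
        · calc y ≤ a₁' ⊔ a₂' := hy
            _ ≤ _ := sup_le_sup le_sup_right le_sup_right
    set IA : Order.Ideal A := hIAid.toIdeal with hIA
    have memIA : ∀ a : A, a ∈ IA ↔ ∃ a₁ a₂ : A, a ≤ a₁ ⊔ a₂ ∧ f a₁ ≤ b ∧ f a₂ ≤ bᶜ :=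
      fun a => Iff.rfl
    -- `⊤ ∉ IA`, since otherwise `b` would be in the range of `f`
    have htop : (⊤ : A) ∉ IA := by
      intro htop
      obtain ⟨a₁, a₂, htop', h₁, h₂⟩ := (memIA ⊤).1 htop
      have hle : a₂ᶜ ≤ a₁ := by
        have : a₂ᶜ = a₂ᶜ ⊓ (a₁ ⊔ a₂) := (inf_eq_left.2 (le_trans le_top htop')).symm
        rw [this, inf_sup_left]
        simp
      refine hbr a₂ᶜ (le_antisymm ((OrderHomClass.mono f hle).trans h₁) ?_)
      rw [map_compl']
      exact compl_compl b ▸ compl_le_compl h₂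
    -- separate: a prime ideal of `A` containing `IA`
    obtain ⟨P, hPprime, hIAP, hPdisj⟩ :=
      DistribLattice.prime_ideal_of_disjoint_filter_ideal
        (F := Order.PFilter.principal (⊤ : A)) (I := IA)
        (by
          rw [Set.disjoint_left]
          rintro x hx hxI
          have : (⊤ : A) ≤ x := hx
          rw [top_le_iff] at this
          exact htop (this ▸ hxI))
    -- two prime ideals of `B` extending `P`, one containing `b` and one not
    obtain ⟨Jx, hJx, hbJx, hJxP⟩ := exists_prime_extension f P hPprime b
      (fun a ha => hIAP ((memIA a).2 ⟨⊥, a, by simp, by simp, ha⟩))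
    obtain ⟨Jy, hJy, hbJy, hJyP⟩ := exists_prime_extension f P hPprime bᶜ
      (fun a ha => hIAP ((memIA a).2 ⟨a, ⊥, by simp, by rwa [compl_compl] at ha, by simp⟩))
    have hbJy' : b ∈ Jy := by
      rcases (Order.Ideal.isPrime_iff_mem_or_compl_mem.1 hJy (x := b)) with h' | h'
      · exact h'
      · exact absurd h' hbJy
    -- the two homomorphisms agree on the image of `f` but differ at `b`
    have hp : ∀ a : A, primeComplHom Jx hJx (f a) = primeComplHom Jy hJy (f a) := by
      intro a
      simp only [primeComplHom, BoundedLatticeHom.coe_mk, LatticeHom.coe_mk, SupHom.coe_mk,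
        eq_iff_iff]
      rw [hJxP a, hJyP a]
    have := congrFun hb ⟨(primeComplHom Jx hJx, primeComplHom Jy hJy), hp⟩
    simp only [primeComplHom, BoundedLatticeHom.coe_mk, LatticeHom.coe_mk, SupHom.coe_mk,
      eq_iff_iff] at this
    exact (this.1 hbJx) hbJy'
end

section
/- Let X be a set and equip the function space X → Prop with the product of the Sierpiński topology on Prop (in which {True} is open but {False} is not). Then this space is T0 and quasi-sober (hence sober), and its frame of open sets is the free frame on X with the subbasic open sets as generators: for every frame L and every function f : X → L there is a unique frame homomorphism h from the frame of opens of X → Prop to L such that h({g | g x}) = f(x) for every x ∈ X. -/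
universe u v

open TopologicalSpace

open Set Topology


namespace Stmt9Aux

variable {X : Type u}

/-- Characteristic function of a finset. -/
def chi (S : Finset X) : X → Prop := fun x => x ∈ S

theorem topo_eq :
    (Pi.topologicalSpace : TopologicalSpace (X → Prop)) =
      generateFrom (⋃ x : X, {{g : X → Prop | g x}}) := by
  rw [generateFrom_iUnion]
  unfold Pi.topologicalSpace
  congr 1
  funext x
  rw [sierpinskiSpace, induced_generateFrom_eq]
  congr 1
  ext s
  simp only [Set.image_singleton, Set.mem_singleton_iff]
  constructor
  · rintro rfl; ext g; simp
  · rintro rfl; ext g; simp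

theorem isOpen_sub (x : X) : IsOpen {g : X → Prop | g x} := by
  show IsOpen[Pi.topologicalSpace] _
  rw [topo_eq]
  exact .basic _ (mem_iUnion.mpr ⟨x, rfl⟩)

theorem generateOpen_of_isOpen {U : Set (X → Prop)} (hU : IsOpen U) :
    GenerateOpen (⋃ x : X, {{g : X → Prop | g x}}) U := by
  rw [show (GenerateOpen (⋃ x : X, {{g : X → Prop | g x}}) U) =
    IsOpen[generateFrom (⋃ x : X, {{g : X → Prop | g x}})] U from rfl, ← topo_eq]
  exact hU

theorem isOpen_of_generateOpen {U : Set (X → Prop)}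
    (hU : GenerateOpen (⋃ x : X, {{g : X → Prop | g x}}) U) : IsOpen U := by
  show IsOpen[Pi.topologicalSpace] U
  rw [topo_eq]
  exact hU

theorem isOpen_upper {U : Set (X → Prop)} (hU : IsOpen U) {g g' : X → Prop}
    (hg : g ∈ U) (hle : ∀ x, g x → g' x) : g' ∈ U := by
  have h := generateOpen_of_isOpen hU
  clear hU
  induction h with
  | basic V hV =>
    obtain ⟨x, hx⟩ := mem_iUnion.mp hV
    simp only [mem_singleton_iff] at hx
    subst hx
    exact hle x hg
  | univ => trivial
  | inter U V _ _ ihU ihV => exact ⟨ihU hg.1, ihV hg.2⟩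
  | sUnion 𝒮 _ ih =>
    obtain ⟨t, ht, hgt⟩ := hg
    exact ⟨t, ht, ih t ht hgt⟩

theorem chi_mem_of_le {U : Set (X → Prop)} (hU : IsOpen U) {S T : Finset X}
    (hST : S ⊆ T) (hS : chi S ∈ U) : chi T ∈ U :=
  isOpen_upper hU hS fun x hx => hST hx

theorem approx {U : Set (X → Prop)} (hU : IsOpen U) :
    ∀ g ∈ U, ∃ S : Finset X, (∀ x ∈ S, g x) ∧ chi S ∈ U := by
  classical
  have h := generateOpen_of_isOpen hU
  clear hU
  induction h with
  | basic V hV =>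
    obtain ⟨x, hx⟩ := mem_iUnion.mp hV
    simp only [mem_singleton_iff] at hx
    subst hx
    intro g hg
    exact ⟨{x}, by simpa using hg, by simp [chi]⟩
  | univ => intro g _; exact ⟨∅, by simp, trivial⟩
  | inter U V hUo hVo ihU ihV =>
    intro g hg
    obtain ⟨S, hS, hSU⟩ := ihU g hg.1
    obtain ⟨T, hT, hTV⟩ := ihV g hg.2
    refine ⟨S ∪ T, ?_, ?_, ?_⟩
    · intro x hx
      rcases Finset.mem_union.mp hx with h | h
      exacts [hS x h, hT x h]
    · exact chi_mem_of_le (isOpen_of_generateOpen hUo) Finset.subset_union_left hSU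
    · exact chi_mem_of_le (isOpen_of_generateOpen hVo) Finset.subset_union_right hTV
  | sUnion 𝒮 _ ih =>
    intro g hg
    obtain ⟨t, ht, hgt⟩ := hg
    obtain ⟨S, h1, h2⟩ := ih t ht g hgt
    exact ⟨S, h1, ⟨t, ht, h2⟩⟩

theorem isClosed_lower {Z : Set (X → Prop)} (hZ : IsClosed Z) {g g' : X → Prop}
    (hg : g ∈ Z) (hle : ∀ x, g' x → g x) : g' ∈ Z := by
  by_contra h
  exact (isOpen_upper hZ.isOpen_compl h hle) hg

theorem isOpen_finset_inter (T : Finset X) : IsOpen {g : X → Prop | ∀ y ∈ T, g y} := by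
  have : {g : X → Prop | ∀ y ∈ T, g y} = ⋂ y ∈ (T : Set X), {g : X → Prop | g y} := by
    ext g; simp
  rw [this]
  exact (T.finite_toSet).isOpen_biInter fun y _ => isOpen_sub y

end Stmt9Aux

open Stmt9Aux

theorem stmt_9_quasiSober (X : Type u) : QuasiSober (X → Prop) := by
  constructor
  intro Z hirr hcl
  set g₀ : X → Prop := fun x => ∃ g ∈ Z, g x with hg₀
  have key : ∀ T : Finset X, (∀ x ∈ T, g₀ x) → ∃ g ∈ Z, ∀ x ∈ T, g x := by
    classical
    intro T
    induction T using Finset.induction_on with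
    | empty => intro _; exact ⟨hirr.nonempty.choose, hirr.nonempty.choose_spec, by simp⟩
    | @insert x T hx ih =>
      intro hT
      obtain ⟨g₁, hg₁Z, hg₁⟩ := ih (fun y hy => hT y (Finset.mem_insert_of_mem hy))
      obtain ⟨g₂, hg₂Z, hg₂⟩ := hT x (Finset.mem_insert_self x T)
      obtain ⟨g, hgZ, hgx, hgT⟩ := hirr.2 {g : X → Prop | g x} {g : X → Prop | ∀ y ∈ T, g y}
        (isOpen_sub x) (isOpen_finset_inter T) ⟨g₂, hg₂Z, hg₂⟩ ⟨g₁, hg₁Z, hg₁⟩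
      refine ⟨g, hgZ, fun y hy => ?_⟩
      rcases Finset.mem_insert.mp hy with rfl | h
      exacts [hgx, hgT y h]
  have hg₀Z : g₀ ∈ Z := by
    by_contra hc
    obtain ⟨S, hS, hSc⟩ := approx hcl.isOpen_compl g₀ hc
    obtain ⟨g, hgZ, hg⟩ := key S hS
    exact hSc (isClosed_lower hcl hgZ (fun x hx => hg x hx))
  refine ⟨g₀, ?_⟩
  rw [IsGenericPoint]
  apply subset_antisymm
  · exact closure_minimal (singleton_subset_iff.mpr hg₀Z) hcl
  · intro g hgZ
    rw [mem_closure_iff]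
    intro O hO hgO
    exact ⟨g₀, isOpen_upper hO hgO (fun x hx => ⟨g, hgZ, hx⟩), rfl⟩

namespace Stmt9Aux

variable {X : Type u} {L : Type v} [Order.Frame L]

/-- The subbasic open `{g | g x}` as an element of `Opens`. -/
def op (x : X) : Opens (X → Prop) := ⟨{g | g x}, isOpen_sub x⟩

/-- The candidate frame homomorphism. -/
noncomputable def hmap (f : X → L) (U : Opens (X → Prop)) : L :=
  ⨆ (S : Finset X) (_ : chi S ∈ (U : Set (X → Prop))), S.inf f

theorem hmap_mono (f : X → L) {U V : Opens (X → Prop)} (h : U ≤ V) :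
    hmap f U ≤ hmap f V :=
  iSup₂_le fun S hS => le_iSup₂ (f := fun S (_ : chi S ∈ (V : Set (X → Prop))) => S.inf f) S (h hS)

theorem hmap_top (f : X → L) : hmap f ⊤ = ⊤ := by
  refine le_antisymm le_top ?_
  refine le_trans ?_
    (le_iSup₂ (f := fun S (_ : chi S ∈ ((⊤ : Opens (X → Prop)) : Set (X → Prop))) => S.inf f)
      (∅ : Finset X) trivial)
  simp

theorem hmap_inf (f : X → L) (U V : Opens (X → Prop)) :
    hmap f (U ⊓ V) = hmap f U ⊓ hmap f V := by
  classical
  refine le_antisymm (le_inf (hmap_mono f inf_le_left) (hmap_mono f inf_le_right)) ?_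
  rw [hmap, hmap]
  simp only [iSup_inf_eq, inf_iSup_eq]
  refine iSup₂_le fun S hS => iSup₂_le fun T hT => ?_
  have h1 : chi (T ∪ S) ∈ ((U ⊓ V : Opens (X → Prop)) : Set (X → Prop)) :=
    ⟨chi_mem_of_le U.isOpen Finset.subset_union_left hT,
     chi_mem_of_le V.isOpen Finset.subset_union_right hS⟩
  refine le_trans (le_of_eq ?_)
    (le_iSup₂ (f := fun S (_ : chi S ∈ ((U ⊓ V : Opens (X → Prop)) : Set (X → Prop))) => S.inf f)
      (T ∪ S) h1)
  exact (Finset.inf_union).symm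

theorem hmap_sSup (f : X → L) (s : Set (Opens (X → Prop))) :
    hmap f (sSup s) = sSup (hmap f '' s) := by
  rw [sSup_image]
  refine le_antisymm ?_ (iSup₂_le fun U hU => hmap_mono f (le_sSup hU))
  refine iSup₂_le fun S hS => ?_
  rw [Opens.coe_sSup] at hS
  obtain ⟨U, ⟨U', hU', rfl⟩, hSU⟩ := hS
  obtain ⟨hU, hSU⟩ := by simpa using hSU
  calc S.inf f ≤ hmap f U' :=
        le_iSup₂ (f := fun S (_ : chi S ∈ (U' : Set (X → Prop))) => S.inf f) S hSU
    _ ≤ ⨆ U ∈ s, hmap f U := le_iSup₂ (f := fun U (_ : U ∈ s) => hmap f U) U' hU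

theorem hmap_sub (f : X → L) (x : X) (U : Opens (X → Prop))
    (hx : (U : Set (X → Prop)) = {g | g x}) : hmap f U = f x := by
  refine le_antisymm (iSup₂_le fun S hS => ?_) ?_
  · rw [hx] at hS
    exact Finset.inf_le (hS : x ∈ S)
  · refine le_trans (le_of_eq Finset.inf_singleton.symm)
      (le_iSup₂ (f := fun S (_ : chi S ∈ (U : Set (X → Prop))) => S.inf f) {x} ?_)
    rw [hx]
    show chi {x} x
    simp [chi]

theorem decomp (U : Opens (X → Prop)) :
    U = ⨆ (S : Finset X) (_ : chi S ∈ (U : Set (X → Prop))), S.inf (fun x => op x) := by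
  apply Opens.ext
  simp only [Opens.coe_iSup, Opens.coe_finset_inf]
  ext g
  simp only [mem_iUnion, Finset.inf_set_eq_iInter, mem_iInter]
  constructor
  · intro hg
    obtain ⟨S, hS, hSU⟩ := approx U.isOpen g hg
    exact ⟨S, hSU, fun x hx => hS x hx⟩
  · rintro ⟨S, hSU, hg⟩
    exact isOpen_upper U.isOpen hSU fun x hx => hg x hx

end Stmt9Aux

/-- The power `X → Prop` of the Sierpiński space is T0 and quasi-sober (hence sober), and its
frame of open sets is the free frame on `X`, generated by the subbasic open sets
`{g | g x}`. -/
theorem stmt_9 (X : Type u) :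
    T0Space (X → Prop) ∧ QuasiSober (X → Prop) ∧
      ∀ (L : Type v) [Order.Frame L] (f : X → L),
        ∃! h : FrameHom (Opens (X → Prop)) L,
          ∀ (x : X) (U : Opens (X → Prop)), (U : Set (X → Prop)) = {g | g x} → h U = f x := by
  refine ⟨inferInstance, stmt_9_quasiSober X, ?_⟩
  intro L _ f
  refine ⟨⟨⟨⟨hmap f, hmap_inf f⟩, hmap_top f⟩, hmap_sSup f⟩, ?_, ?_⟩
  · intro x U hU
    exact hmap_sub f x U hU
  · intro h' hh'
    ext U
    show h' U = hmap f U
    conv_lhs => rw [decomp U]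
    rw [map_iSup₂]
    have : ∀ S : Finset X, h' (S.inf (fun x => op x)) = S.inf f := by
      intro S
      rw [map_finset_inf]
      exact Finset.inf_congr rfl fun x _ => hh' x (op x) rfl
    simp only [this]
    rfl
end

section
/- Let F be a frame with a map η : ℕ → F having the universal property of the free frame on ℕ: for every frame M and function f : ℕ → M there is a unique frame homomorphism F → M carrying each η(n) to f(n). Let L be a frame, q : F → L a surjective frame homomorphism, and a, b : ℕ → F sequences such that q(aₙ) = q(bₙ) for all n and such that for every frame M and frame homomorphism g : F → M with g(aₙ) = g(bₙ) for all n there is a frame homomorphism h : L → M with h ∘ q = g (so L is a countably presented frame). Then L is spatial: for all x ≠ y in L there is a frame homomorphism p : L → Prop with p(x) ≠ p(y). -/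
universe u

namespace Stmt10Aux

open Classical in
noncomputable instance : Order.Frame (ULift.{u} Prop) :=
  Order.Frame.ofMinimalAxioms
    ⟨fun x s => by
      rw [← ULift.down_le]
      intro h
      obtain ⟨hx, hs⟩ : x.down ∧ sSup (ULift.up ⁻¹' s) := h
      rw [sSup_Prop_eq] at hs
      obtain ⟨p, hps, hp⟩ := hs
      have hle : x ⊓ ULift.up p ≤ ⨆ b ∈ s, x ⊓ b := le_biSup _ hps
      exact (ULift.down_le.mpr hle) ⟨hx, hp⟩⟩

theorem preimage_up_eq_image_down (s : Set (ULift.{u} Prop)) :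
    ULift.up ⁻¹' s = ULift.down '' s := by
  ext p
  constructor
  · intro hp
    exact ⟨ULift.up p, hp, rfl⟩
  · rintro ⟨⟨y⟩, hy, rfl⟩
    exact hy

noncomputable def downHom : FrameHom (ULift.{u} Prop) Prop where
  toFun := ULift.down
  map_inf' _ _ := rfl
  map_top' := rfl
  map_sSup' s := by
    show (sSup s).down = _
    rw [ULift.down_sSup, preimage_up_eq_image_down]

noncomputable def upHom : FrameHom Prop (ULift.{u} Prop) where
  toFun := ULift.up
  map_inf' _ _ := rfl
  map_top' := rfl
  map_sSup' s := by
    apply ULift.down_injective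
    rw [ULift.down_sSup]
    show sSup s = _
    congr 1
    ext p
    constructor
    · intro hp
      exact ⟨p, hp, rfl⟩
    · rintro ⟨x, hx, hxp⟩
      have : x = p := congrArg ULift.down hxp
      exact this ▸ hx

@[simp] theorem downHom_apply (x : ULift.{u} Prop) : downHom x = x.down := rfl
@[simp] theorem upHom_apply (p : Prop) : (upHom.{u} p) = ULift.up p := rfl


open Classical

variable {F : Type u} [Order.Frame F] (η : ℕ → F)

/-- The basic elements below `w`: finite meets of generators that lie below `w`. -/
def gens (w : F) : Set F := {c | (∃ S : Finset ℕ, c = S.inf η) ∧ c ≤ w}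

/-- `w` is a supremum of basic elements. -/
def Good (w : F) : Prop := w ≤ sSup (gens η w)

variable {η}

theorem sSup_gens_le (w : F) : sSup (gens η w) ≤ w := sSup_le fun _ hc => hc.2

theorem good_basic (S : Finset ℕ) : Good η (S.inf η) :=
  le_sSup ⟨⟨S, rfl⟩, le_rfl⟩

theorem good_top : Good η (⊤ : F) := by
  have : ((∅ : Finset ℕ).inf η : F) = ⊤ := Finset.inf_empty
  exact this ▸ good_basic ∅

theorem good_sSup {A : Set F} (hA : ∀ w ∈ A, Good η w) : Good η (sSup A) := by
  apply sSup_le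
  intro w hw
  refine (hA w hw).trans (sSup_le_sSup ?_)
  rintro c ⟨hb, hle⟩
  exact ⟨hb, hle.trans (le_sSup hw)⟩

theorem good_inf {w₁ w₂ : F} (h₁ : Good η w₁) (h₂ : Good η w₂) : Good η (w₁ ⊓ w₂) := by
  refine le_trans (inf_le_inf h₁ h₂) ?_
  rw [inf_sSup_eq]
  refine iSup₂_le fun c₂ hc₂ => ?_
  rw [sSup_inf_eq]
  refine iSup₂_le fun c₁ hc₁ => ?_
  obtain ⟨⟨S₁, rfl⟩, hle₁⟩ := hc₁
  obtain ⟨⟨S₂, rfl⟩, hle₂⟩ := hc₂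
  exact le_sSup ⟨⟨S₁ ∪ S₂, Finset.inf_union.symm⟩, inf_le_inf hle₁ hle₂⟩

variable (η)

/-- The subframe of `F` generated by the image of `η`. -/
abbrev Sub : Type u := {w : F // Good η w}

noncomputable instance : SupSet (Sub η) :=
  ⟨fun A => ⟨sSup (Subtype.val '' A), good_sSup (by rintro w ⟨⟨w, hw⟩, -, rfl⟩; exact hw)⟩⟩

theorem sub_coe_sSup (A : Set (Sub η)) :
    ((sSup A : Sub η) : F) = sSup (Subtype.val '' A) := rfl

theorem sub_le_iff {x y : Sub η} : x ≤ y ↔ (x : F) ≤ (y : F) := Iff.rfl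

noncomputable instance : CompleteLattice (Sub η) :=
  completeLatticeOfSup _ (fun A =>
    ⟨fun x hx => (sub_le_iff η).mpr (le_sSup (Set.mem_image_of_mem _ hx)),
     fun x hx => by
      rw [sub_le_iff, sub_coe_sSup]
      apply sSup_le
      rintro c ⟨d, hd, rfl⟩
      exact hx hd⟩)

theorem sub_coe_inf (x y : Sub η) : ((x ⊓ y : Sub η) : F) = (x : F) ⊓ (y : F) := by
  apply le_antisymm
  · exact le_inf ((sub_le_iff η).mp inf_le_left) ((sub_le_iff η).mp inf_le_right)
  · have hz : (⟨(x : F) ⊓ (y : F), good_inf x.2 y.2⟩ : Sub η) ≤ x ⊓ y :=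
      le_inf ((sub_le_iff η).mpr inf_le_left) ((sub_le_iff η).mpr inf_le_right)
    exact (sub_le_iff η).mp hz

theorem sub_coe_top : ((⊤ : Sub η) : F) = ⊤ := by
  apply le_antisymm le_top
  exact (sub_le_iff η).mp (le_top (a := (⟨⊤, good_top⟩ : Sub η)))

noncomputable instance : Order.Frame (Sub η) :=
  Order.Frame.ofMinimalAxioms
    ⟨fun x s => by
      rw [sub_le_iff, sub_coe_inf, sub_coe_sSup, inf_sSup_eq]
      refine iSup₂_le ?_
      rintro c ⟨b, hb, rfl⟩
      have h1 : (x : F) ⊓ (b : F) = ((x ⊓ b : Sub η) : F) := (sub_coe_inf η x b).symm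
      rw [h1]
      exact (sub_le_iff η).mp (le_biSup _ hb)⟩

/-- The inclusion of the subframe into `F` is a frame homomorphism. -/
noncomputable def subIncl : FrameHom (Sub η) F where
  toFun := Subtype.val
  map_inf' := sub_coe_inf η
  map_top' := sub_coe_top η
  map_sSup' := sub_coe_sSup η

/-- Every element of a frame freely generated by `η` is a join of finite meets of
generators. -/
theorem all_good
    (hfree : ∀ (M : Type u) [Order.Frame M] (f : ℕ → M),
      ∃! h : FrameHom F M, ∀ n : ℕ, h (η n) = f n) (w : F) : Good η w := by
  obtain ⟨h, hh, -⟩ := hfree (Sub η) (fun n => ⟨η n, by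
    have : (({n} : Finset ℕ).inf η : F) = η n := Finset.inf_singleton
    exact this ▸ good_basic {n}⟩)
  obtain ⟨h₀, -, huniq⟩ := hfree F η
  have e1 : (subIncl η).comp h = h₀ := huniq _ (fun n => by
    show ((h (η n) : Sub η) : F) = η n
    rw [hh n])
  have e2 : FrameHom.id F = h₀ := huniq _ (fun n => rfl)
  have e3 : ((h w : Sub η) : F) = w := DFunLike.congr_fun (e1.trans e2.symm) w
  exact e3 ▸ (h w).2


theorem nat_rec_exists {σ : Type*} (P : σ → Prop) (Q : ℕ → σ → σ → Prop)
    (s₀ : σ) (h₀ : P s₀) (step : ∀ k s, P s → ∃ t, P t ∧ Q k s t) :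
    ∃ f : ℕ → σ, f 0 = s₀ ∧ (∀ k, P (f k)) ∧ ∀ k, Q k (f k) (f (k + 1)) := by
  choose g hg1 hg2 using step
  let f : ℕ → {s // P s} := fun k =>
    Nat.rec ⟨s₀, h₀⟩ (fun k ih => ⟨g k ih.1 ih.2, hg1 k ih.1 ih.2⟩) k
  exact ⟨fun k => (f k).1, rfl, fun k => (f k).2, fun k => hg2 k (f k).1 (f k).2⟩

variable {η} in
/-- Points of the free frame: every `α : ℕ → Prop` induces a frame homomorphism
`F → Prop`, and it is characterized on all of `F` by basic elements. -/
theorem exists_point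
    (hfree : ∀ (M : Type u) [Order.Frame M] (f : ℕ → M),
      ∃! h : FrameHom F M, ∀ n : ℕ, h (η n) = f n) (α : ℕ → Prop) :
    ∃ p : FrameHom F Prop,
      ∀ w, p w ↔ ∃ S : Finset ℕ, (∀ n ∈ S, α n) ∧ S.inf η ≤ w := by
  obtain ⟨h, hh, -⟩ := hfree (ULift.{u} Prop) (fun n => ULift.up (α n))
  set p : FrameHom F Prop := downHom.comp h with hpdef
  have hpη : ∀ n, p (η n) = α n := fun n => congrArg ULift.down (hh n)
  have hbasic : ∀ S : Finset ℕ, p (S.inf η) ↔ ∀ n ∈ S, α n := by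
    intro S
    rw [show p (S.inf η) = S.inf (⇑p ∘ η) from map_finset_inf p S η]
    rw [show ⇑p ∘ η = α from funext hpη, Finset.inf_eq_iInf]
    simp [iInf_Prop_eq]
  refine ⟨p, fun w => ⟨?_, ?_⟩⟩
  · intro hw
    have hg : w = sSup (gens η w) :=
      le_antisymm (all_good η hfree w) (sSup_gens_le w)
    rw [hg, map_sSup, sSup_Prop_eq] at hw
    obtain ⟨P, ⟨c, hc, rfl⟩, hP⟩ := hw
    obtain ⟨⟨S, rfl⟩, hle⟩ := hc
    exact ⟨S, (hbasic S).mp hP, hle⟩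
  · rintro ⟨S, hS, hle⟩
    exact OrderHomClass.mono p hle ((hbasic S).mpr hS)

variable {η} in
theorem extend (hgood : ∀ w : F, Good η w) {L : Type u} [Order.Frame L]
    (q : FrameHom F L) (v : F) (S : Finset ℕ) (w : F)
    (h : ¬ q (S.inf η ⊓ w) ≤ q v) :
    ∃ T : Finset ℕ, S ⊆ T ∧ T.inf η ≤ w ∧ ¬ q (T.inf η) ≤ q v := by
  by_contra hcon
  push_neg at hcon
  apply h
  refine le_trans (OrderHomClass.mono q (hgood (S.inf η ⊓ w))) ?_
  rw [map_sSup]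
  apply sSup_le
  rintro _ ⟨c, ⟨⟨T₀, rfl⟩, hle⟩, rfl⟩
  have hT : (S ∪ T₀).inf η = T₀.inf η := by
    rw [Finset.inf_union]
    exact inf_eq_right.mpr (hle.trans inf_le_left)
  have := hcon (S ∪ T₀) Finset.subset_union_left
    (by rw [hT]; exact hle.trans inf_le_right)
  rwa [hT] at this

/-- The separation lemma: if `¬ q u ≤ q v` then there is a point of `F` respecting the
relations `a n ~ b n` which contains `u` but not `v`. -/
theorem sep
    (hfree : ∀ (M : Type u) [Order.Frame M] (f : ℕ → M),
      ∃! h : FrameHom F M, ∀ n : ℕ, h (η n) = f n)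
    {L : Type u} [Order.Frame L] (q : FrameHom F L) (a b : ℕ → F)
    (hab : ∀ n : ℕ, q (a n) = q (b n)) (u v : F) (huv : ¬ q u ≤ q v) :
    ∃ p : FrameHom F Prop, (∀ n, (p (a n) ↔ p (b n))) ∧ p u ∧ ¬ p v := by
  have hgood : ∀ w : F, Good η w := all_good η hfree
  -- the scheduled tasks
  set cf : ℕ → F := fun k =>
    if (Nat.unpair k).2 % 2 = 0 then a (Nat.unpair k).1 else b (Nat.unpair k).1 with hcf
  set df : ℕ → F := fun k =>
    if (Nat.unpair k).2 % 2 = 0 then b (Nat.unpair k).1 else a (Nat.unpair k).1 with hdf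
  have hqcd : ∀ k, q (cf k) = q (df k) := by
    intro k
    simp only [hcf, hdf]
    split_ifs
    · exact hab _
    · exact (hab _).symm
  -- the initial stage
  have h0 : ¬ q ((∅ : Finset ℕ).inf η ⊓ u) ≤ q v := by
    rwa [Finset.inf_empty, top_inf_eq]
  obtain ⟨S₀, -, hS₀u, hS₀⟩ := extend hgood q v ∅ u h0
  -- the recursive construction
  have step : ∀ (k : ℕ) (S : Finset ℕ), ¬ q (S.inf η) ≤ q v →
      ∃ T, (¬ q (T.inf η) ≤ q v) ∧ (S ⊆ T ∧ (S.inf η ≤ cf k → T.inf η ≤ df k)) := by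
    intro k S hS
    by_cases hc : S.inf η ≤ cf k
    · have hqe : q (S.inf η ⊓ df k) = q (S.inf η) := by
        calc q (S.inf η ⊓ df k) = q (S.inf η) ⊓ q (df k) := map_inf q _ _
          _ = q (S.inf η) ⊓ q (cf k) := by rw [hqcd k]
          _ = q (S.inf η ⊓ cf k) := (map_inf q _ _).symm
          _ = q (S.inf η) := by rw [inf_eq_left.mpr hc]
      obtain ⟨T, hST, hTle, hT⟩ := extend hgood q v S (df k) (hqe ▸ hS)
      exact ⟨T, hT, hST, fun _ => hTle⟩
    · exact ⟨S, hS, subset_rfl, fun hle => absurd hle hc⟩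
  obtain ⟨f, hf0, hfP, hfQ⟩ := nat_rec_exists _ _ S₀ hS₀ step
  have mono : ∀ k l, k ≤ l → f k ⊆ f l := by
    intro k l hkl
    induction l, hkl using Nat.le_induction with
    | base => exact subset_rfl
    | succ l hkl ih => exact ih.trans (hfQ l).1
  -- the point
  set α : ℕ → Prop := fun n => ∃ k, n ∈ f k with hα
  obtain ⟨p, hp⟩ := exists_point hfree α
  have cover : ∀ S : Finset ℕ, (∀ n ∈ S, α n) → ∃ k, S ⊆ f k := by
    intro S hS
    choose g hg using hS
    refine ⟨S.attach.sup (fun x => g x.1 x.2), fun n hn => ?_⟩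
    exact mono _ _ (Finset.le_sup (Finset.mem_attach S ⟨n, hn⟩)) (hg n hn)
  have main : ∀ (c d : F), (∀ K : ℕ, ∃ k, K ≤ k ∧ cf k = c ∧ df k = d) → p c → p d := by
    intro c d hsched hpc
    obtain ⟨S, hSα, hSle⟩ := (hp c).mp hpc
    obtain ⟨k₁, hk₁⟩ := cover S hSα
    obtain ⟨k, hk, hck, hdk⟩ := hsched k₁
    have h1 : (f k).inf η ≤ cf k := by
      rw [hck]
      exact le_trans (Finset.inf_mono (mono k₁ k hk)) ((Finset.inf_mono hk₁).trans hSle)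
    have h2 : (f (k + 1)).inf η ≤ d := hdk ▸ (hfQ k).2 h1
    exact (hp d).mpr ⟨f (k + 1), fun m hm => ⟨k + 1, hm⟩, h2⟩
  have schedA : ∀ n K, ∃ k, K ≤ k ∧ cf k = a n ∧ df k = b n := by
    intro n K
    refine ⟨Nat.pair n (2 * K), le_trans (by omega) (Nat.right_le_pair _ _), ?_, ?_⟩ <;>
      simp [hcf, hdf, Nat.unpair_pair, Nat.mul_mod_right]
  have schedB : ∀ n K, ∃ k, K ≤ k ∧ cf k = b n ∧ df k = a n := by
    intro n K
    have hm : (2 * K + 1) % 2 = 1 := by omega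
    refine ⟨Nat.pair n (2 * K + 1), le_trans (by omega) (Nat.right_le_pair _ _), ?_, ?_⟩ <;>
      simp [hcf, hdf, Nat.unpair_pair, hm]
  refine ⟨p, fun n => ⟨main (a n) (b n) (schedA n), main (b n) (a n) (schedB n)⟩, ?_, ?_⟩
  · exact (hp u).mpr ⟨f 0, fun m hm => ⟨0, hf0 ▸ hm⟩, by rw [hf0]; exact hS₀u⟩
  · intro hpv
    obtain ⟨S, hSα, hSle⟩ := (hp v).mp hpv
    obtain ⟨k, hk⟩ := cover S hSα
    exact hfP k (OrderHomClass.mono q ((Finset.inf_mono hk).trans hSle))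

end Stmt10Aux

open Stmt10Aux in
/-- **Spatiality of countably presented frames** (Fourman–Grayson, Heckmann). If `F` is the free
frame on countably many generators `η : ℕ → F` and `L` is the quotient of `F` by countably many
relations `q (a n) = q (b n)`, then `L` has enough points: frame homomorphisms `L → Prop`
separate elements of `L`. -/
theorem stmt_10 {F : Type u} [Order.Frame F] (η : ℕ → F)
    (hfree : ∀ (M : Type u) [Order.Frame M] (f : ℕ → M),
      ∃! h : FrameHom F M, ∀ n : ℕ, h (η n) = f n)
    {L : Type u} [Order.Frame L] (q : FrameHom F L) (hq : Function.Surjective ⇑q)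
    (a b : ℕ → F) (hab : ∀ n : ℕ, q (a n) = q (b n))
    (hpres : ∀ (M : Type u) [Order.Frame M] (g : FrameHom F M),
      (∀ n : ℕ, g (a n) = g (b n)) → ∃ h : FrameHom L M, h.comp q = g) :
    ∀ x y : L, x ≠ y → ∃ p : FrameHom L Prop, p x ≠ p y := by
  have key : ∀ x y : L, ¬ x ≤ y → ∃ p : FrameHom L Prop, p x ∧ ¬ p y := by
    intro x y hxy
    obtain ⟨u, rfl⟩ := hq x
    obtain ⟨v, rfl⟩ := hq y
    obtain ⟨p, hrel, hpu, hpv⟩ := sep η hfree q a b hab u v hxy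
    obtain ⟨h, hh⟩ := hpres (ULift.{u} Prop) (upHom.comp p)
      (fun n => congrArg ULift.up (propext (hrel n)))
    have eu : h (q u) = ULift.up (p u) := DFunLike.congr_fun hh u
    have ev : h (q v) = ULift.up (p v) := DFunLike.congr_fun hh v
    refine ⟨downHom.comp h, ?_, ?_⟩
    · show (h (q u)).down
      rw [eu]
      exact hpu
    · show ¬ (h (q v)).down
      rw [ev]
      exact hpv
  intro x y hxy
  by_cases hle : x ≤ y
  · have hyx : ¬ y ≤ x := fun hyx => hxy (le_antisymm hle hyx)
    obtain ⟨p, h1, h2⟩ := key y x hyx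
    exact ⟨p, fun e => h2 (by rw [e]; exact h1)⟩
  · obtain ⟨p, h1, h2⟩ := key x y hle
    exact ⟨p, fun e => h2 (by rw [← e]; exact h1)⟩
end

section
/- Let A be a complete lattice and r a binary relation on A. Let s be the smallest binary relation on A such that: (i) s is reflexive; (ii) for every subset S ⊆ A and b ∈ A, if s a b for all a ∈ S then s (sSup S) b; (iii) if a ≤ b and s b c then s a c; and (iv) if r a b and s b c then s a c. Then s is transitive (and hence s is the smallest order-congruence of the complete join-semilattice A containing r). -/
universe u

/-- Let `s` be the smallest binary relation on a complete lattice which is reflexive, closed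
under suprema on the left, left-compatible with `≤`, and left-compatible with a given relation
`r`. Then `s` is transitive (hence is the order-congruence of the complete join-semilattice
generated by `r`). -/
theorem stmt_12 {A : Type u} [CompleteLattice A] (r s : A → A → Prop)
    (hrefl : ∀ a : A, s a a)
    (hsup : ∀ (S : Set A) (b : A), (∀ a ∈ S, s a b) → s (sSup S) b)
    (hle : ∀ a b c : A, a ≤ b → s b c → s a c)
    (hr : ∀ a b c : A, r a b → s b c → s a c)
    (hmin : ∀ t : A → A → Prop, (∀ a : A, t a a) →
      (∀ (S : Set A) (b : A), (∀ a ∈ S, t a b) → t (sSup S) b) →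
      (∀ a b c : A, a ≤ b → t b c → t a c) →
      (∀ a b c : A, r a b → t b c → t a c) →
      ∀ a b : A, s a b → t a b) :
    ∀ a b c : A, s a b → s b c → s a c := by
  intro a b c hab hbc
  exact hmin (fun x y => ∀ z, s y z → s x z)
    (fun a z h => h)
    (fun S b h z hbz => hsup S z (fun a ha => h a ha z hbz))
    (fun a b c hab h z hcz => hle a b z hab (h z hcz))
    (fun a b c hab h z hcz => hr a b z hab (h z hcz))
    a b hab c hbc
end

section
/- Let (A_i)_{i∈I} be a family of sets, each equipped with a relation ◁_i between subsets of A_i satisfying: (monotonicity) if B ⊇ B₀, B₀ ◁_i C₀ and C₀ ⊆ C then B ◁_i C; (reflexivity) {a} ◁_i {a} for every a ∈ A_i; and (transitivity) if B ∪ C ◁_i D ∪ E, and B ◁_i {c} ∪ E for every c ∈ C, and B ∪ {d} ◁_i E for every d ∈ D, then B ◁_i E. On the disjoint union of the A_i, define B ◁ C iff there exists i such that (A_i ∩ B) ◁_i (A_i ∩ C), where A_i ∩ B denotes the set of elements of A_i whose image in the disjoint union lies in B. Then ◁ again satisfies monotonicity, reflexivity, and transitivity, and it is the smallest relation satisfying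 monotonicity whose restriction along each inclusion A_i → ⨿_j A_j contains ◁_i. -/
universe u v

/-- Monotonicity axiom for a relation between subsets. -/
def RelMono {α : Type v} (R : Set α → Set α → Prop) : Prop :=
  ∀ B₀ B C₀ C : Set α, B₀ ⊆ B → R B₀ C₀ → C₀ ⊆ C → R B C

/-- Reflexivity axiom for a relation between subsets. -/
def RelRefl {α : Type v} (R : Set α → Set α → Prop) : Prop :=
  ∀ a : α, R {a} {a}

/-- Transitivity (cut) axiom for a relation between subsets. -/
def RelTrans {α : Type v} (R : Set α → Set α → Prop) : Prop :=
  ∀ B C D E : Set α, R (B ∪ C) (D ∪ E) → (∀ c ∈ C, R B (insert c E)) →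
    (∀ d ∈ D, R (insert d B) E) → R B E

/-- Coproducts of distributive prepolyposets: given a family of sets `A i` with relations `R i`
satisfying monotonicity, reflexivity and transitivity, the relation `B ◁ C ↔ ∃ i,
(A i ∩ B) ◁ᵢ (A i ∩ C)` on the disjoint union again satisfies these axioms and is the smallest
monotone relation whose restriction along each inclusion contains `R i`. -/
theorem stmt_15 {I : Type u} {A : I → Type v} (R : ∀ i, Set (A i) → Set (A i) → Prop)
    (hmono : ∀ i, RelMono (R i)) (hrefl : ∀ i, RelRefl (R i)) (htrans : ∀ i, RelTrans (R i)) :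
    RelMono (fun B C : Set (Σ i, A i) => ∃ i, R i (Sigma.mk i ⁻¹' B) (Sigma.mk i ⁻¹' C)) ∧
    RelRefl (fun B C : Set (Σ i, A i) => ∃ i, R i (Sigma.mk i ⁻¹' B) (Sigma.mk i ⁻¹' C)) ∧
    RelTrans (fun B C : Set (Σ i, A i) => ∃ i, R i (Sigma.mk i ⁻¹' B) (Sigma.mk i ⁻¹' C)) ∧
    ∀ Q : Set (Σ i, A i) → Set (Σ i, A i) → Prop, RelMono Q →
      (∀ (i : I) (B C : Set (A i)), R i B C → Q (Sigma.mk i '' B) (Sigma.mk i '' C)) →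
      ∀ B C : Set (Σ i, A i), (∃ i, R i (Sigma.mk i ⁻¹' B) (Sigma.mk i ⁻¹' C)) → Q B C := by

  classical
  have pre_insert : ∀ (i j : I) (x : A i) (E : Set (Σ i, A i)),
      Sigma.mk j ⁻¹' (insert (Sigma.mk i x) E) =
        if h : j = i then insert (h ▸ x) (Sigma.mk j ⁻¹' E) else Sigma.mk j ⁻¹' E := by
    intro i j x E
    split
    · subst ‹j = i›
      ext y
      simp [Set.mem_insert_iff, Sigma.ext_iff]
    · ext y
      simp only [Set.mem_preimage, Set.mem_insert_iff, Set.mem_insert_iff]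
      constructor
      · rintro (h | h)
        · exact absurd (congrArg Sigma.fst h) ‹¬ j = i›
        · exact h
      · exact fun h => Or.inr h
  refine ⟨?_, ?_, ?_, ?_⟩
  · rintro B₀ B C₀ C hB ⟨i, hi⟩ hC
    exact ⟨i, hmono i _ _ _ _ (fun x hx => hB hx) hi (fun x hx => hC hx)⟩
  · rintro ⟨i, a⟩
    refine ⟨i, ?_⟩
    have : Sigma.mk i ⁻¹' ({⟨i, a⟩} : Set (Σ i, A i)) = {a} := by
      ext y; simp [Sigma.ext_iff]
    rw [this]
    exact hrefl i a
  · rintro B C D E ⟨i, hBC⟩ hC hD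
    by_contra hcon
    push_neg at hcon
    rw [Set.preimage_union, Set.preimage_union] at hBC
    refine hcon i (htrans i _ (Sigma.mk i ⁻¹' C) (Sigma.mk i ⁻¹' D) _ hBC ?_ ?_)
    · intro c hc
      obtain ⟨j, hj⟩ := hC ⟨i, c⟩ hc
      rw [pre_insert] at hj
      split at hj
      · subst ‹j = i›; exact hj
      · exact absurd hj (hcon j)
    · intro d hd
      obtain ⟨j, hj⟩ := hD ⟨i, d⟩ hd
      rw [pre_insert] at hj
      split at hj
      · subst ‹j = i›; exact hj
      · exact absurd hj (hcon j)
  · rintro Q hQ hQR B C ⟨i, hi⟩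
    exact hQ _ _ _ _ (Set.image_preimage_subset _ _) (hQR i _ _ hi)
      (Set.image_preimage_subset _ _)
end

section
/- Let A be a set and ◁ a relation between finite subsets of A and arbitrary subsets of A satisfying: (monotonicity) if B ⊇ B₀, B₀ ◁ C₀ and C₀ ⊆ C then B ◁ C; (reflexivity) {a} ◁ {a} for every a ∈ A; and (transitivity) for finite B, C and arbitrary D, E: if B ∪ C ◁ D ∪ E, and B ◁ {c} ∪ E for every c ∈ C, and B ∪ {d} ◁ E for every d ∈ D, then B ◁ E. Let L be a frame and η : A → L a function such that the infimum of η over B is ≤ the supremum of η over C whenever B ◁ C, and which is universal: for every frame M and every function f : A → M satisfying the same implications, there is a unique frame homomorphism h : L → M with h ∘ η = f. Then η reflects ◁: for every finite subset B and arbitrary subset C of A, if the infimum of η over B is ≤ the supremum of η over C in L, then B ◁ C. -/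
universe u

section SatAux

variable {A : Type u} [DecidableEq A]

/-- Up-closed collections of finite subsets (larger finite set = smaller meet). -/
def UpC (S : Set (Finset A)) : Prop :=
  ∀ ⦃B B' : Finset A⦄, B ∈ S → B ⊆ B' → B' ∈ S

/-- Saturated (closed) collections of finite subsets with respect to `R`. -/
def SClosed (R : Finset A → Set A → Prop) (S : Set (Finset A)) : Prop :=
  UpC S ∧ ∀ ⦃B : Finset A⦄ ⦃C : Set A⦄, R B C → (∀ c ∈ C, insert c B ∈ S) → B ∈ S

/-- The closure (coverage) generated by a collection `U`. -/
inductive Cov (R : Finset A → Set A → Prop) (U : Set (Finset A)) : Finset A → Prop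
  | base {B B' : Finset A} : B ∈ U → B ⊆ B' → Cov R U B'
  | step {B : Finset A} {C : Set A} : R B C → (∀ c ∈ C, Cov R U (insert c B)) → Cov R U B

variable {R : Finset A → Set A → Prop}

theorem Cov.up
    (hmono : ∀ (B₀ B : Finset A) (C₀ C : Set A), B₀ ⊆ B → R B₀ C₀ → C₀ ⊆ C → R B C)
    {U : Set (Finset A)} {B : Finset A} (h : Cov R U B) :
    ∀ ⦃B' : Finset A⦄, B ⊆ B' → Cov R U B' := by
  induction h with
  | base hU hsub => exact fun B' h' => Cov.base hU (hsub.trans h')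
  | step hR _ ih =>
      exact fun B' h' => Cov.step (hmono _ _ _ _ h' hR subset_rfl)
        (fun c hc => ih c hc (Finset.insert_subset_insert _ h'))

theorem Cov.closed
    (hmono : ∀ (B₀ B : Finset A) (C₀ C : Set A), B₀ ⊆ B → R B₀ C₀ → C₀ ⊆ C → R B C)
    {U : Set (Finset A)} : SClosed R {B | Cov R U B} :=
  ⟨fun _ _ hB hsub => hB.up hmono hsub, fun _ _ hR h => Cov.step hR h⟩

theorem Cov.min {S U : Set (Finset A)} (hS : SClosed R S) (hU : U ⊆ S) {B : Finset A}
    (h : Cov R U B) : B ∈ S := by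
  induction h with
  | base hB hsub => exact hS.1 (hU hB) hsub
  | step hR _ ih => exact hS.2 hR ih

theorem Cov.distrib
    (hmono : ∀ (B₀ B : Finset A) (C₀ C : Set A), B₀ ⊆ B → R B₀ C₀ → C₀ ⊆ C → R B C)
    {S U : Set (Finset A)} (hS : UpC S) (hU : UpC U) {B : Finset A}
    (h : Cov R U B) : ∀ ⦃D : Finset A⦄, B ⊆ D → D ∈ S → Cov R (S ∩ U) D := by
  induction h with
  | base hB hsub =>
      exact fun D hBD hDS => Cov.base ⟨hDS, hU hB (hsub.trans hBD)⟩ subset_rfl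
  | step hR _ ih =>
      exact fun D hBD hDS => Cov.step (hmono _ _ _ _ hBD hR subset_rfl)
        (fun c hc => ih c hc (Finset.insert_subset_insert _ hBD)
          (hS hDS (Finset.subset_insert _ _)))

theorem SClosed.univ : SClosed R (Set.univ : Set (Finset A)) :=
  ⟨fun _ _ _ _ => trivial, fun _ _ _ _ => trivial⟩

theorem SClosed.inter {S T : Set (Finset A)} (hS : SClosed R S) (hT : SClosed R T) :
    SClosed R (S ∩ T) :=
  ⟨fun _ _ hB hsub => ⟨hS.1 hB.1 hsub, hT.1 hB.2 hsub⟩,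
   fun _ _ hR h => ⟨hS.2 hR (fun c hc => (h c hc).1), hT.2 hR (fun c hc => (h c hc).2)⟩⟩

theorem SClosed.pi {ι : Sort*} {S : ι → Set (Finset A)} (h : ∀ i, SClosed R (S i)) :
    SClosed R {B | ∀ i, B ∈ S i} :=
  ⟨fun _ _ hB hsub i => (h i).1 (hB i) hsub,
   fun _ _ hR hc i => (h i).2 hR (fun c hcC => hc c hcC i)⟩

/-- The collection `{B | R B {a}}` is saturated. -/
theorem fclosed
    (hmono : ∀ (B₀ B : Finset A) (C₀ C : Set A), B₀ ⊆ B → R B₀ C₀ → C₀ ⊆ C → R B C)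
    (htrans : ∀ (B C : Finset A) (D E : Set A), R (B ∪ C) (D ∪ E) →
      (∀ c ∈ C, R B (insert c E)) → (∀ d ∈ D, R (insert d B) E) → R B E)
    (a : A) : SClosed R {B | R B {a}} := by
  refine ⟨fun B B' hB hsub => hmono _ _ _ _ hsub hB subset_rfl, ?_⟩
  intro B C hR h
  exact htrans B ∅ C {a}
    (hmono _ _ _ _ Finset.subset_union_left hR Set.subset_union_left)
    (by simp) h

/-- Cut rule: from `R B C` and `R B' {b}` for all `b ∈ B`, deduce `R B' C`. -/
theorem Rcut
    (hmono : ∀ (B₀ B : Finset A) (C₀ C : Set A), B₀ ⊆ B → R B₀ C₀ → C₀ ⊆ C → R B C)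
    (htrans : ∀ (B C : Finset A) (D E : Set A), R (B ∪ C) (D ∪ E) →
      (∀ c ∈ C, R B (insert c E)) → (∀ d ∈ D, R (insert d B) E) → R B E)
    {B B' : Finset A} {C : Set A} (hBC : R B C) (h : ∀ b ∈ B, R B' {b}) : R B' C :=
  htrans B' B ∅ C
    (hmono B (B' ∪ B) C (∅ ∪ C) Finset.subset_union_right hBC Set.subset_union_right)
    (fun b hb => hmono _ _ _ _ subset_rfl (h b hb)
      (Set.singleton_subset_iff.mpr (Set.mem_insert b C)))
    (by simp)

/-- Final extraction: a finite set covered by `{B' | ∃ c ∈ C, R B' {c}}` satisfies `R B C`. -/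
theorem cov_to_R
    (hmono : ∀ (B₀ B : Finset A) (C₀ C : Set A), B₀ ⊆ B → R B₀ C₀ → C₀ ⊆ C → R B C)
    (htrans : ∀ (B C : Finset A) (D E : Set A), R (B ∪ C) (D ∪ E) →
      (∀ c ∈ C, R B (insert c E)) → (∀ d ∈ D, R (insert d B) E) → R B E)
    {C : Set A} {B : Finset A}
    (h : Cov R {B' | ∃ c ∈ C, R B' {c}} B) : R B C := by
  induction h with
  | base hB hsub =>
      obtain ⟨c, hc, hRc⟩ := hB
      exact hmono _ _ _ _ hsub hRc (Set.singleton_subset_iff.mpr hc)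
  | @step B₀ C₀ hR _ ih =>
      exact htrans B₀ ∅ C₀ C
        (hmono _ _ _ _ Finset.subset_union_left hR Set.subset_union_left)
        (by simp) ih

end SatAux

/-- **Saturation for (ω,∞)-distributive prepolyposets.** If `(A, R)` is a relation between finite
subsets and arbitrary subsets of `A` satisfying monotonicity, reflexivity and transitivity, and
`η : A → L` presents the frame `L` subject to the relations `R`, then `η` reflects `R`: any
inequality `⨅_{b ∈ B} η b ≤ ⨆_{c ∈ C} η c` holding in `L` is already recorded in `R`. -/
theorem stmt_16 {A L : Type u} [DecidableEq A] [Order.Frame L]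
    (R : Finset A → Set A → Prop)
    (hmono : ∀ (B₀ B : Finset A) (C₀ C : Set A), B₀ ⊆ B → R B₀ C₀ → C₀ ⊆ C → R B C)
    (hrefl : ∀ a : A, R {a} {a})
    (htrans : ∀ (B C : Finset A) (D E : Set A), R (B ∪ C) (D ∪ E) →
      (∀ c ∈ C, R B (insert c E)) → (∀ d ∈ D, R (insert d B) E) → R B E)
    (η : A → L)
    (hη : ∀ (B : Finset A) (C : Set A), R B C → B.inf η ≤ sSup (η '' C))
    (huniv : ∀ (M : Type u) [Order.Frame M] (f : A → M),
      (∀ (B : Finset A) (C : Set A), R B C → B.inf f ≤ sSup (f '' C)) →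
      ∃! h : FrameHom L M, ∀ a : A, h (η a) = f a) :
    ∀ (B : Finset A) (C : Set A), B.inf η ≤ sSup (η '' C) → R B C := by
  intro B C hBC
  let M : Type u := {S : Set (Finset A) // SClosed R S}
  letI instInf : InfSet M :=
    ⟨fun 𝒮 => ⟨{B | ∀ S : 𝒮, B ∈ (S : M).1}, SClosed.pi (fun S => (S : M).2)⟩⟩
  letI instCL : CompleteLattice M :=
    completeLatticeOfInf M (fun 𝒮 =>
      ⟨fun S hS => fun B hB => hB ⟨S, hS⟩,
       fun T hT => fun B hB S => hT S.2 hB⟩)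
  -- helper conversions between `≤` and carrier inclusion
  have le_of_sub : ∀ {x y : M}, x.1 ⊆ y.1 → x ≤ y := fun h => h
  have sub_of_le : ∀ {x y : M}, x ≤ y → x.1 ⊆ y.1 := fun h => h
  -- carrier of sSup is the coverage closure of the union
  have hSS : ∀ 𝒮 : Set M, (sSup 𝒮).1 = {B' | Cov R (⋃ S ∈ 𝒮, (S : M).1) B'} := by
    intro 𝒮
    apply le_antisymm
    · exact sub_of_le (sSup_le (fun S hS => le_of_sub
        (y := (⟨_, Cov.closed hmono⟩ : M))
        (fun B hB => Cov.base (Set.mem_biUnion hS hB) subset_rfl)))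
    · intro B' hB'
      refine Cov.min (sSup 𝒮).2 (fun x hx => ?_) hB'
      obtain ⟨S, hS, hxS⟩ := Set.mem_iUnion₂.mp hx
      exact sub_of_le (le_sSup hS) hxS
  -- carrier of binary inf
  have hinf2 : ∀ (a b : M) (B' : Finset A), B' ∈ (a ⊓ b).1 ↔ B' ∈ a.1 ∧ B' ∈ b.1 := by
    intro a b B'
    constructor
    · intro h
      exact ⟨sub_of_le inf_le_left h, sub_of_le inf_le_right h⟩
    · intro h
      exact sub_of_le
        (le_inf (le_of_sub (x := (⟨a.1 ∩ b.1, a.2.inter b.2⟩ : M)) Set.inter_subset_left)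
          (le_of_sub (x := (⟨a.1 ∩ b.1, a.2.inter b.2⟩ : M)) Set.inter_subset_right)) h
  -- the frame distributivity axiom
  have frameAx : ∀ (a : M) (s : Set M), a ⊓ sSup s ≤ ⨆ b ∈ s, a ⊓ b := by
    intro a s
    refine le_of_sub (fun B hB => ?_)
    obtain ⟨hBa, hBs⟩ := (hinf2 a (sSup s) B).mp hB
    rw [hSS s] at hBs
    have hUup : UpC (⋃ S ∈ s, (S : M).1) := by
      intro x y hx hxy
      obtain ⟨S, hS, hxS⟩ := Set.mem_iUnion₂.mp hx
      exact Set.mem_iUnion₂.mpr ⟨S, hS, S.2.1 hxS hxy⟩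
    have h2 := Cov.distrib hmono a.2.1 hUup hBs subset_rfl hBa
    refine Cov.min (⨆ b ∈ s, a ⊓ b).2 ?_ h2
    rintro x ⟨hxa, hxU⟩
    obtain ⟨S, hS, hxS⟩ := Set.mem_iUnion₂.mp hxU
    exact sub_of_le (le_biSup _ hS) ((hinf2 a S x).mpr ⟨hxa, hxS⟩)
  letI instFrame : Order.Frame M :=
    Order.Frame.ofMinimalAxioms { instCL with inf_sSup_le_iSup_inf := frameAx }
  -- re-derive the helpers for the frame instance
  have le_of_sub' : ∀ {x y : M}, x.1 ⊆ y.1 → x ≤ y := fun h => h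
  have sub_of_le' : ∀ {x y : M}, x ≤ y → x.1 ⊆ y.1 := fun h => h
  have hSS' : ∀ 𝒮 : Set M, (sSup 𝒮).1 = {B' | Cov R (⋃ S ∈ 𝒮, (S : M).1) B'} := by
    intro 𝒮
    apply le_antisymm
    · exact sub_of_le' (sSup_le (fun S hS => le_of_sub'
        (y := (⟨_, Cov.closed hmono⟩ : M))
        (fun B hB => Cov.base (Set.mem_biUnion hS hB) subset_rfl)))
    · intro B' hB'
      refine Cov.min (sSup 𝒮).2 (fun x hx => ?_) hB'
      obtain ⟨S, hS, hxS⟩ := Set.mem_iUnion₂.mp hx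
      exact sub_of_le' (le_sSup hS) hxS
  have hinf2' : ∀ (a b : M) (B' : Finset A), B' ∈ (a ⊓ b).1 ↔ B' ∈ a.1 ∧ B' ∈ b.1 := by
    intro a b B'
    constructor
    · intro h
      exact ⟨sub_of_le' inf_le_left h, sub_of_le' inf_le_right h⟩
    · intro h
      exact sub_of_le'
        (le_inf (le_of_sub' (x := (⟨a.1 ∩ b.1, a.2.inter b.2⟩ : M)) Set.inter_subset_left)
          (le_of_sub' (x := (⟨a.1 ∩ b.1, a.2.inter b.2⟩ : M)) Set.inter_subset_right)) h
  have htop : ∀ B' : Finset A, B' ∈ (⊤ : M).1 := fun B' =>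
    sub_of_le' (le_top (a := (⟨Set.univ, SClosed.univ⟩ : M))) (Set.mem_univ B')
  -- the presenting map into M
  let f : A → M := fun a => ⟨{B' | R B' {a}}, fclosed hmono htrans a⟩
  have hinfFinset : ∀ (s : Finset A) (B' : Finset A),
      B' ∈ (s.inf f).1 ↔ ∀ b ∈ s, B' ∈ (f b).1 := by
    intro s
    induction s using Finset.induction_on with
    | empty => intro B'; simpa using htop B'
    | @insert a s ha ih =>
        intro B'
        rw [Finset.inf_insert, hinf2' (f a) (s.inf f) B', ih B', Finset.forall_mem_insert]
  have hf : ∀ (B₀ : Finset A) (C₀ : Set A), R B₀ C₀ → B₀.inf f ≤ sSup (f '' C₀) := by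
    intro B₀ C₀ hR
    refine le_of_sub' (fun B' hB' => ?_)
    have hB'' : ∀ b ∈ B₀, R B' {b} := fun b hb => (hinfFinset B₀ B').mp hB' b hb
    show B' ∈ (sSup (f '' C₀)).1
    rw [hSS' (f '' C₀)]
    refine Cov.step (Rcut hmono htrans hR hB'') (fun c hc => ?_)
    refine Cov.base (B := insert c B') ?_ subset_rfl
    refine Set.mem_biUnion (Set.mem_image_of_mem f hc) ?_
    exact hmono {c} (insert c B') {c} {c}
      (Finset.singleton_subset_iff.mpr (Finset.mem_insert_self c B')) (hrefl c) subset_rfl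
  obtain ⟨h, hh, -⟩ := huniv M f hf
  -- transport the inequality
  have h1 : B.inf f ≤ sSup (f '' C) := by
    have e1 : B.inf f = h (B.inf η) := by
      rw [map_finset_inf]
      exact Finset.inf_congr rfl (fun a _ => (hh a).symm)
    have e2 : h (sSup (η '' C)) = sSup (f '' C) := by
      rw [map_sSup, Set.image_image]
      exact congrArg sSup (Set.image_congr (fun a _ => hh a))
    calc B.inf f = h (B.inf η) := e1
      _ ≤ h (sSup (η '' C)) := OrderHomClass.mono h hBC
      _ = sSup (f '' C) := e2
  have hBmem : B ∈ (B.inf f).1 := (hinfFinset B B).mpr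
    (fun b hb => hmono {b} B {b} {b} (Finset.singleton_subset_iff.mpr hb) (hrefl b) subset_rfl)
  have hBmem2 : B ∈ (sSup (f '' C)).1 := sub_of_le' h1 hBmem
  rw [hSS' (f '' C)] at hBmem2
  have hU : (⋃ S ∈ f '' C, (S : M).1) = {B' | ∃ c ∈ C, R B' {c}} := by
    ext x
    constructor
    · intro hx
      obtain ⟨S, hS, hxS⟩ := Set.mem_iUnion₂.mp hx
      obtain ⟨c, hc, rfl⟩ := hS
      exact ⟨c, hc, hxS⟩
    · rintro ⟨c, hc, hR⟩
      exact Set.mem_biUnion (Set.mem_image_of_mem f hc) hR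
  rw [hU] at hBmem2
  exact cov_to_R hmono htrans hBmem2
end

section
/- Let A be a zero-dimensional frame, i.e., a frame in which every element is a supremum of complemented elements. Then the following are equivalent: (i) A is ultraparacompact: every subset S ⊆ A with sSup S = ⊤ refines to a pairwise disjoint subset T with sSup T = ⊤; (ii) every complemented a ∈ A is ultraparacompact: whenever a ≤ sSup S, there is a pairwise disjoint subset T refining S with a ≤ sSup T; (iii) for every complemented a ∈ A, every cover of a by complemented elements refines to a pairwise disjoint cover of a; (iv) for every complemented a ∈ A, every cover of a refines to a pairwise disjoint cover of a consisting of complemented elements. -/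
universe u

/-- Characterizations of ultraparacompactness for a zero-dimensional frame. -/
theorem stmt_17 {A : Type u} [Order.Frame A]
    (hzd : ∀ a : A, ∃ S : Set A, (∀ b ∈ S, ∃ b' : A, IsCompl b b') ∧ sSup S = a) :
    List.TFAE
      [∀ S : Set A, sSup S = ⊤ →
          ∃ T : Set A, (∀ t ∈ T, ∃ s ∈ S, t ≤ s) ∧
            (∀ t₁ ∈ T, ∀ t₂ ∈ T, t₁ ≠ t₂ → t₁ ⊓ t₂ = ⊥) ∧ sSup T = ⊤,
        ∀ a : A, (∃ a' : A, IsCompl a a') → ∀ S : Set A, a ≤ sSup S →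
          ∃ T : Set A, (∀ t ∈ T, ∃ s ∈ S, t ≤ s) ∧
            (∀ t₁ ∈ T, ∀ t₂ ∈ T, t₁ ≠ t₂ → t₁ ⊓ t₂ = ⊥) ∧ a ≤ sSup T,
        ∀ a : A, (∃ a' : A, IsCompl a a') → ∀ S : Set A, (∀ s ∈ S, ∃ s' : A, IsCompl s s') →
          a ≤ sSup S →
          ∃ T : Set A, (∀ t ∈ T, ∃ s ∈ S, t ≤ s) ∧
            (∀ t₁ ∈ T, ∀ t₂ ∈ T, t₁ ≠ t₂ → t₁ ⊓ t₂ = ⊥) ∧ a ≤ sSup T,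
        ∀ a : A, (∃ a' : A, IsCompl a a') → ∀ S : Set A, a ≤ sSup S →
          ∃ T : Set A, (∀ t ∈ T, ∃ s ∈ S, t ≤ s) ∧
            (∀ t₁ ∈ T, ∀ t₂ ∈ T, t₁ ≠ t₂ → t₁ ⊓ t₂ = ⊥) ∧
            (∀ t ∈ T, ∃ t' : A, IsCompl t t') ∧ a ≤ sSup T] := by
  tfae_have 1 → 2 := by
    rintro h1 a ⟨a', ha⟩ S haS
    rcases Set.eq_empty_or_nonempty S with rfl | ⟨s₀, hs₀⟩
    · refine ⟨∅, by simp, by simp, ?_⟩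
      simpa using haS
    · set S' : Set A := ((· ⊓ a) '' S) ∪ {a'} with hS'
      have himg : sSup ((· ⊓ a) '' S) = sSup S ⊓ a := by
        rw [sSup_inf_eq, sSup_image]
      have hcov : sSup S' = ⊤ := by
        apply top_unique
        have h1' : a ≤ sSup ((· ⊓ a) '' S) := by
          rw [himg]
          exact le_inf haS le_rfl
        have h2' : a ⊔ a' ≤ sSup S' := by
          apply sup_le
          · exact h1'.trans (sSup_le_sSup Set.subset_union_left)
          · exact le_sSup (Set.mem_union_right _ rfl)
        rw [ha.sup_eq_top] at h2'
        exact h2'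
      obtain ⟨T, hTref, hTdisj, hTtop⟩ := h1 S' hcov
      refine ⟨(· ⊓ a) '' T, ?_, ?_, ?_⟩
      · rintro u ⟨t, ht, rfl⟩
        obtain ⟨s', hs', hts'⟩ := hTref t ht
        rcases hs' with ⟨s, hs, rfl⟩ | hs'
        · exact ⟨s, hs, (inf_le_left.trans hts').trans inf_le_left⟩
        · rw [Set.mem_singleton_iff] at hs'
          rw [hs'] at hts'
          refine ⟨s₀, hs₀, ?_⟩
          have hb : t ⊓ a ≤ ⊥ := by
            calc t ⊓ a ≤ a' ⊓ a := inf_le_inf_right a hts'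
            _ = ⊥ := by rw [inf_comm, ha.inf_eq_bot]
          exact hb.trans bot_le
      · rintro u₁ ⟨t₁, ht₁, rfl⟩ u₂ ⟨t₂, ht₂, rfl⟩ hne
        have ht12 : t₁ ≠ t₂ := fun h => hne (by rw [h])
        have : t₁ ⊓ a ⊓ (t₂ ⊓ a) ≤ t₁ ⊓ t₂ :=
          le_inf (inf_le_left.trans inf_le_left) (inf_le_right.trans inf_le_left)
        rw [hTdisj t₁ ht₁ t₂ ht₂ ht12] at this
        exact le_bot_iff.mp this
      · have : sSup ((· ⊓ a) '' T) = sSup T ⊓ a := by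
          rw [sSup_inf_eq, sSup_image]
        rw [this, hTtop, top_inf_eq]
  tfae_have 2 → 4 := by
    intro h2 a ha S haS
    obtain ⟨a', ha'⟩ := ha
    obtain ⟨T, hTref, hTdisj, hTcov⟩ := h2 a ⟨a', ha'⟩ S haS
    set U : Set A := (· ⊓ a) '' T with hU
    have hUdisj : ∀ u₁ ∈ U, ∀ u₂ ∈ U, u₁ ≠ u₂ → u₁ ⊓ u₂ = ⊥ := by
      rintro u₁ ⟨t₁, ht₁, rfl⟩ u₂ ⟨t₂, ht₂, rfl⟩ hne
      have ht12 : t₁ ≠ t₂ := fun h => hne (by rw [h])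
      have : t₁ ⊓ a ⊓ (t₂ ⊓ a) ≤ t₁ ⊓ t₂ :=
        le_inf (inf_le_left.trans inf_le_left) (inf_le_right.trans inf_le_left)
      rw [hTdisj t₁ ht₁ t₂ ht₂ ht12] at this
      exact le_bot_iff.mp this
    have hUsup : sSup U = a := by
      have : sSup U = sSup T ⊓ a := by
        rw [sSup_inf_eq, sSup_image]
      rw [this, inf_eq_right.mpr hTcov]
    refine ⟨U, ?_, hUdisj, ?_, hUsup.ge⟩
    · rintro u ⟨t, ht, rfl⟩
      obtain ⟨s, hs, hts⟩ := hTref t ht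
      exact ⟨s, hs, inf_le_left.trans hts⟩
    · -- each element of U is complemented, with complement a' ⊔ sSup (U \ {u})
      intro u hu
      refine ⟨a' ⊔ sSup (U \ {u}), ?_, ?_⟩
      · -- disjoint
        rw [disjoint_iff]
        apply le_bot_iff.mp
        rw [inf_sup_left]
        apply sup_le
        · have h1 : u ≤ a := by
            obtain ⟨t, ht, rfl⟩ := hu; exact inf_le_right
          have : u ⊓ a' ≤ a ⊓ a' := inf_le_inf_right a' h1
          rw [ha'.inf_eq_bot] at this
          exact this
        · rw [inf_sSup_eq]
          refine iSup₂_le fun v hv => ?_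
          rw [hUdisj u hu v hv.1 (fun h => hv.2 h.symm)]
      · -- codisjoint
        rw [codisjoint_iff]
        apply top_unique
        have : u ⊔ (a' ⊔ sSup (U \ {u})) = (u ⊔ sSup (U \ {u})) ⊔ a' := by
          ac_rfl
        rw [this]
        have husup : u ⊔ sSup (U \ {u}) = sSup U := by
          rw [← sSup_insert, Set.insert_diff_singleton, Set.insert_eq_self.mpr hu]
        rw [husup, hUsup, ha'.sup_eq_top]
  tfae_have 4 → 3 := by
    intro h4 a ha S _ haS
    obtain ⟨T, h₁, h₂, _, h₄⟩ := h4 a ha S haS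
    exact ⟨T, h₁, h₂, h₄⟩
  tfae_have 3 → 1 := by
    intro h3 S hStop
    set B : Set A := {b | (∃ b' : A, IsCompl b b') ∧ ∃ s ∈ S, b ≤ s} with hB
    have hBcov : (⊤ : A) ≤ sSup B := by
      rw [← hStop]
      apply sSup_le
      intro s hs
      obtain ⟨Ss, hSc, hSsup⟩ := hzd s
      rw [← hSsup]
      apply sSup_le
      intro b hb
      exact le_sSup ⟨hSc b hb, s, hs, (le_sSup hb).trans hSsup.le⟩
    obtain ⟨T, hTref, hTdisj, hTcov⟩ :=
      h3 ⊤ ⟨⊥, isCompl_top_bot⟩ B (fun b hb => hb.1) hBcov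
    refine ⟨T, ?_, hTdisj, top_unique hTcov⟩
    intro t ht
    obtain ⟨b, hb, htb⟩ := hTref t ht
    obtain ⟨s, hs, hbs⟩ := hb.2
    exact ⟨s, hs, htb.trans hbs⟩
  tfae_finish
end

section
/- Cut admissibility holds for the finitary one-sided sequent calculus for infinitary propositional logic: for every set X, every finite set A of prenex complete Boolean terms over X, and every term a, if A ∪ {a} is derivable and A ∪ {¬a} is derivable, then A is derivable. -/
universe u

/-- Prenex complete Boolean terms over a set `X`: literals `x`, `¬x` for `x ∈ X`, closed under
set-indexed conjunctions and disjunctions. -/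
inductive PTerm (X : Type u) : Type (u + 1)
  | var : X → PTerm X
  | nvar : X → PTerm X
  | conj : {ι : Type u} → (ι → PTerm X) → PTerm X
  | disj : {ι : Type u} → (ι → PTerm X) → PTerm X

namespace PTerm

/-- Negation: the involution on prenex terms interchanging `x` with `¬x` and `⋀` with `⋁`. -/
def compl {X : Type u} : PTerm X → PTerm X
  | var x => nvar x
  | nvar x => var x
  | conj t => disj fun i => (t i).compl
  | disj t => conj fun i => (t i).compl

end PTerm

/-- The finitary one-sided sequent calculus for infinitary propositional logic, deriving
(finite) sets of prenex terms. -/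
inductive FDer {X : Type u} : Set (PTerm X) → Prop
  | id {A : Set (PTerm X)} (x : X) : PTerm.var x ∈ A → PTerm.nvar x ∈ A → FDer A
  | conj {A : Set (PTerm X)} {ι : Type u} (t : ι → PTerm X) :
      PTerm.conj t ∈ A → (∀ i : ι, FDer (insert (t i) A)) → FDer A
  | disj {A : Set (PTerm X)} {ι : Type u} (t : ι → PTerm X) (i : ι) :
      PTerm.disj t ∈ A → FDer (insert (t i) A) → FDer A

theorem PTerm.compl_compl {X : Type u} : ∀ a : PTerm X, a.compl.compl = a
  | .var _ => rfl
  | .nvar _ => rfl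
  | .conj t => congrArg PTerm.conj (funext fun i => PTerm.compl_compl (t i))
  | .disj t => congrArg PTerm.disj (funext fun i => PTerm.compl_compl (t i))

theorem FDer.weaken {X : Type u} {A B : Set (PTerm X)} (h : FDer A) (hAB : A ⊆ B) :
    FDer B := by
  induction h generalizing B with
  | id x h1 h2 => exact .id x (hAB h1) (hAB h2)
  | conj t ht _ ih => exact .conj t (hAB ht) fun i => ih i (Set.insert_subset_insert hAB)
  | disj t i ht _ ih => exact .disj t i (hAB ht) (ih (Set.insert_subset_insert hAB))

/-- Inversion for the conjunction rule. -/
theorem FDer.invConj {X : Type u} {Γ : Set (PTerm X)} (h : FDer Γ) :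
    ∀ {ι : Type u} (t : ι → PTerm X) (i : ι), FDer (insert (t i) (Γ \ {PTerm.conj t})) := by
  induction h with
  | id y h1 h2 =>
    intro ι t i
    exact .id y (Or.inr ⟨h1, by simp⟩) (Or.inr ⟨h2, by simp⟩)
  | conj s hs hprem ih =>
    intro ι t i
    by_cases hst : PTerm.conj s = PTerm.conj t
    · injection hst with hι hs'
      subst hι
      have hs2 := eq_of_heq hs'
      subst hs2
      refine (ih i s i).weaken ?_
      intro b hb
      rcases hb with rfl | ⟨hb, hne⟩
      · exact Or.inl rfl
      · rcases hb with rfl | hb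
        · exact Or.inl rfl
        · exact Or.inr ⟨hb, hne⟩
    · refine .conj s (Or.inr ⟨hs, by simpa using hst⟩) fun j => (ih j t i).weaken ?_
      intro b hb
      rcases hb with rfl | ⟨hb, hne⟩
      · exact Or.inr (Or.inl rfl)
      · rcases hb with rfl | hb
        · exact Or.inl rfl
        · exact Or.inr (Or.inr ⟨hb, hne⟩)
  | disj s j hs hprem ih =>
    intro ι t i
    refine .disj s j (Or.inr ⟨hs, by simp⟩) ((ih t i).weaken ?_)
    intro b hb
    rcases hb with rfl | ⟨hb, hne⟩
    · exact Or.inr (Or.inl rfl)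
    · rcases hb with rfl | hb
      · exact Or.inl rfl
      · exact Or.inr (Or.inr ⟨hb, hne⟩)

/-- Cut admissibility for the formula `a`. -/
def Cut {X : Type u} (a : PTerm X) : Prop :=
  ∀ Γ Δ : Set (PTerm X), FDer Γ → FDer Δ → FDer (Γ \ {a} ∪ Δ \ {a.compl})

theorem Cut.compl {X : Type u} {a : PTerm X} (h : Cut a) : Cut a.compl := by
  intro Γ Δ h1 h2
  rw [PTerm.compl_compl]
  exact (h Δ Γ h2 h1).weaken (Set.union_comm _ _).subset

theorem cutVar {X : Type u} (x : X) : Cut (PTerm.var x) := by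
  intro Γ Δ h₁ h₂
  induction h₁ with
  | id y hv hn =>
    by_cases hxy : y = x
    · subst hxy
      refine h₂.weaken ?_
      intro b hb
      by_cases hbn : b = PTerm.nvar y
      · exact Or.inl ⟨hbn ▸ hn, by simp [hbn]⟩
      · exact Or.inr ⟨hb, by simpa [PTerm.compl] using hbn⟩
    · exact .id y (Or.inl ⟨hv, by simp [hxy]⟩) (Or.inl ⟨hn, by simp⟩)
  | conj t ht _ ih =>
    refine .conj t (Or.inl ⟨ht, by simp⟩) fun i => (ih i).weaken ?_
    intro b hb
    rcases hb with ⟨hb, hne⟩ | hb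
    · rcases hb with rfl | hb
      · exact Or.inl rfl
      · exact Or.inr (Or.inl ⟨hb, hne⟩)
    · exact Or.inr (Or.inr hb)
  | disj t i ht _ ih =>
    refine .disj t i (Or.inl ⟨ht, by simp⟩) (ih.weaken ?_)
    intro b hb
    rcases hb with ⟨hb, hne⟩ | hb
    · rcases hb with rfl | hb
      · exact Or.inl rfl
      · exact Or.inr (Or.inl ⟨hb, hne⟩)
    · exact Or.inr (Or.inr hb)

theorem cutConj {X : Type u} {ι : Type u} (t : ι → PTerm X)
    (ihcut : ∀ i, Cut (t i)) : Cut (PTerm.conj t) := by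
  intro Γ Δ h₁ h₂
  induction h₂ with
  | id y hv hn =>
    exact .id y (Or.inr ⟨hv, by simp [PTerm.compl]⟩) (Or.inr ⟨hn, by simp [PTerm.compl]⟩)
  | conj s hs _ ih =>
    refine .conj s (Or.inr ⟨hs, by simp [PTerm.compl]⟩) fun j => (ih j).weaken ?_
    intro b hb
    rcases hb with hb | ⟨hb, hne⟩
    · exact Or.inr (Or.inl hb)
    · rcases hb with rfl | hb
      · exact Or.inl rfl
      · exact Or.inr (Or.inr ⟨hb, hne⟩)
  | @disj Δ' κ s j hs _ ih =>
    by_cases hsa : PTerm.disj s = (PTerm.conj t).compl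
    · -- the cut formula's complement is principal: use inversion + cut on a subformula
      have hsa' : PTerm.disj s = PTerm.disj fun i => (t i).compl := hsa
      injection hsa' with hι hs'
      subst hι
      have hs2 := eq_of_heq hs'
      subst hs2
      have h2' : FDer (insert ((t j).compl) (Γ \ {PTerm.conj t} ∪ Δ' \ {(PTerm.conj t).compl})) := by
        refine ih.weaken ?_
        intro b hb
        rcases hb with hb | ⟨hb, hne⟩
        · exact Or.inr (Or.inl hb)
        · rcases hb with rfl | hb
          · exact Or.inl rfl
          · exact Or.inr (Or.inr ⟨hb, hne⟩)
      have h1' : FDer (insert (t j) (Γ \ {PTerm.conj t})) := h₁.invConj t j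
      refine (ihcut j _ _ h1' h2').weaken ?_
      intro b hb
      rcases hb with ⟨hb, hne⟩ | ⟨hb, hne⟩
      · rcases hb with rfl | hb
        · exact (hne rfl).elim
        · exact Or.inl hb
      · rcases hb with rfl | hb
        · exact (hne rfl).elim
        · exact hb
    · refine .disj s j (Or.inr ⟨hs, by simpa using hsa⟩) (ih.weaken ?_)
      intro b hb
      rcases hb with hb | ⟨hb, hne⟩
      · exact Or.inr (Or.inl hb)
      · rcases hb with rfl | hb
        · exact Or.inl rfl
        · exact Or.inr (Or.inr ⟨hb, hne⟩)

theorem cutAll {X : Type u} : ∀ a : PTerm X, Cut a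
  | .var x => cutVar x
  | .nvar x => (cutVar x).compl
  | .conj t => cutConj t fun i => cutAll (t i)
  | .disj t => by
      have h : Cut (PTerm.conj fun i => (t i).compl) :=
        cutConj _ fun i => (cutAll (t i)).compl
      have h2 := h.compl
      have he : (PTerm.conj fun i => (t i).compl).compl = PTerm.disj t :=
        congrArg PTerm.disj (funext fun i => PTerm.compl_compl (t i))
      exact he ▸ h2

/-- **Cut admissibility** for the finitary sequent calculus: if `A ∪ {a}` and `A ∪ {¬a}` are
derivable, for a finite set of terms `A`, then so is `A`. -/
theorem stmt_18 {X : Type u} (A : Set (PTerm X)) (hA : A.Finite) (a : PTerm X)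
    (h₁ : FDer (insert a A)) (h₂ : FDer (insert a.compl A)) : FDer A := by
  refine (cutAll a (insert a A) (insert a.compl A) h₁ h₂).weaken ?_
  intro b hb
  rcases hb with ⟨hb, hne⟩ | ⟨hb, hne⟩ <;>
    · rcases hb with rfl | hb
      · exact (hne rfl).elim
      · exact hb
end
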